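/- arXiv:2312.12847 — 3 statements merged into one kernel-verified Lean document; each statement's English description precedes it below -/
import Mathlib

section
/- Let 1 < q ≤ 2 be a real number and assume b^{q−1} < E[W^q] < ∞ (the supercritical case). Then the limit lim_{n→∞} (log E[Y_n^q])/n exists and equals log(E[W^q]/b^{q−1}). -/
open MeasureTheory ProbabilityTheory Filter

/-- The distribution of the totally critical random variable `W_TC`, which takes
the value `b` with probability `b⁻¹` and the value `0` with probability `1 - b⁻¹`. -/
noncomputable def WTCdist (b : ℕ) : Measure ℝ :=
  ((b : ENNReal)⁻¹) • Measure.dirac (b : ℝ) + (1 - (b : ENNReal)⁻¹) • Measure.dirac 0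

/-- The Mandelbrot cascade martingale
`Y_n = b^{-n} ∑_{|v| = n} ∏_{∅ ≺ u ⪯ v} W(u)` on the `b`-adic tree,
where words of length `n` are encoded as functions `Fin n → Fin b` and the
nonempty prefixes of such a word `v` are `(List.ofFn v).take (k+1)` for `k < n`. -/
noncomputable def badicY {Ω : Type*} (b : ℕ) (Wv : List (Fin b) → Ω → ℝ) (n : ℕ) (ω : Ω) : ℝ :=
  ((b : ℝ) ^ n)⁻¹ *
    ∑ v : Fin n → Fin b, ∏ k ∈ Finset.range n, Wv ((List.ofFn v).take (k + 1)) ω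

lemma myRpow_add_le {x y p : ℝ} (hx : 0 ≤ x) (hy : 0 ≤ y) (hp0 : 0 ≤ p) (hp1 : p ≤ 1) :
    (x + y) ^ p ≤ x ^ p + y ^ p := by
  have := NNReal.rpow_add_le_add_rpow (x.toNNReal) (y.toNNReal) hp0 hp1
  rw [← Real.toNNReal_add hx hy] at this
  have h := NNReal.coe_le_coe.2 this
  push_cast [NNReal.coe_rpow, Real.coe_toNNReal _ (add_nonneg hx hy),
    Real.coe_toNNReal _ hx, Real.coe_toNNReal _ hy] at h
  exact h

lemma myAdd_rpow_le {x y p : ℝ} (hx : 0 ≤ x) (hy : 0 ≤ y) (hp : 1 ≤ p) :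
    x ^ p + y ^ p ≤ (x + y) ^ p := by
  have := NNReal.add_rpow_le_rpow_add (x.toNNReal) (y.toNNReal) hp
  rw [← Real.toNNReal_add hx hy] at this
  have h := NNReal.coe_le_coe.2 this
  push_cast [NNReal.coe_rpow, Real.coe_toNNReal _ (add_nonneg hx hy),
    Real.coe_toNNReal _ hx, Real.coe_toNNReal _ hy] at h
  exact h

lemma rpow_split {x q : ℝ} (hx : 0 ≤ x) (hq : 0 < q) : x ^ q = x * x ^ (q - 1) := by
  rcases eq_or_lt_of_le hx with h | h
  · rcases eq_or_ne q 1 with rfl | hq1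
    · simp
    · have hq1' : q - 1 ≠ 0 := fun hc => hq1 (by linarith [sub_eq_zero.mp hc])
      rw [← h, Real.zero_rpow hq.ne', Real.zero_rpow hq1', zero_mul]
  · have : x ^ q = x ^ ((1:ℝ) + (q-1)) := by norm_num
    rw [this, Real.rpow_add h, Real.rpow_one]

/-- Key inequality: `(x+y)^q ≤ x^q + y^q + x*y^(q-1) + x^(q-1)*y` for `1 ≤ q ≤ 2`. -/
lemma rpow_add_le_cross {x y q : ℝ} (hx : 0 ≤ x) (hy : 0 ≤ y) (hq1 : 1 ≤ q) (hq2 : q ≤ 2) :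
    (x + y) ^ q ≤ x ^ q + y ^ q + (x * y ^ (q-1) + x ^ (q-1) * y) := by
  have hq0 : (0:ℝ) < q := by linarith
  have hxy : 0 ≤ x + y := by linarith
  rw [rpow_split hxy hq0]
  have hsub : (x + y) ^ (q-1) ≤ x ^ (q-1) + y ^ (q-1) :=
    myRpow_add_le hx hy (by linarith) (by linarith)
  calc (x + y) * (x + y) ^ (q-1) ≤ (x + y) * (x ^ (q-1) + y ^ (q-1)) := by
        apply mul_le_mul_of_nonneg_left hsub hxy
    _ = x * x ^ (q-1) + y * y ^ (q-1) + (x * y ^ (q-1) + x ^ (q-1) * y) := by ring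
    _ = x ^ q + y ^ q + (x * y ^ (q-1) + x ^ (q-1) * y) := by
        rw [← rpow_split hx hq0, ← rpow_split hy hq0]

lemma rpow_qsub_le {x q : ℝ} (hx : 0 ≤ x) (hq1 : 1 ≤ q) (hq2 : q ≤ 2) :
    x ^ (q - 1) ≤ 1 + x := by
  rcases le_total x 1 with h | h
  · have := Real.rpow_le_one hx h (by linarith : (0:ℝ) ≤ q - 1)
    linarith
  · calc x ^ (q-1) ≤ x ^ (1:ℝ) := Real.rpow_le_rpow_of_exponent_le h (by linarith)
    _ = x := Real.rpow_one x
    _ ≤ 1 + x := by linarith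

lemma le_one_add_rpow {x q : ℝ} (hx : 0 ≤ x) (hq1 : 1 ≤ q) : x ≤ 1 + x ^ q := by
  rcases le_total x 1 with h | h
  · nlinarith [Real.rpow_nonneg hx q]
  · calc x = x ^ (1:ℝ) := (Real.rpow_one x).symm
    _ ≤ x ^ q := Real.rpow_le_rpow_of_exponent_le h hq1
    _ ≤ 1 + x ^ q := by linarith

lemma myIIndepFun_reindex {Ω ι ι' : Type*} [MeasurableSpace Ω] {μ : Measure Ω}
    {β : Type*} [m : MeasurableSpace β] (g : ι' → ι) (hg : Function.Injective g)
    {f : ι → Ω → β} (h : iIndepFun f μ) :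
    iIndepFun (fun i => f (g i)) μ := by
  classical
  rw [iIndepFun_iff_measure_inter_preimage_eq_mul] at h ⊢
  intro S sets hsets
  set sets' : ι → Set β := fun i => ⋂ j ∈ S.filter (fun j => g j = i), sets j with hsets'
  have hfix : ∀ j ∈ S, sets' (g j) = sets j := by
    intro j hj
    have : S.filter (fun j' => g j' = g j) = {j} := by
      ext j'
      simp only [Finset.mem_filter, Finset.mem_singleton]
      constructor
      · rintro ⟨_, hgj⟩; exact hg hgj
      · rintro rfl; exact ⟨hj, rfl⟩
    simp only [hsets']
    rw [this]
    simp
  have hmeas' : ∀ i, i ∈ S.image g → MeasurableSet (sets' i) := by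
    intro i _
    exact MeasurableSet.biInter (Finset.countable_toSet _) (fun j hj =>
      hsets j (Finset.mem_filter.mp hj).1)
  have key := h (S.image g) hmeas'
  have h1 : (⋂ i ∈ S.image g, f i ⁻¹' sets' i) = ⋂ j ∈ S, (fun ω => f (g j) ω) ⁻¹' sets j := by
    rw [Finset.set_biInter_finset_image]
    exact Set.iInter₂_congr (fun j hj => by rw [hfix j hj])
  have h2 : (∏ i ∈ S.image g, μ (f i ⁻¹' sets' i)) = ∏ j ∈ S, μ ((fun ω => f (g j) ω) ⁻¹' sets j) := by
    rw [Finset.prod_image (fun a ha b hb hab => hg hab)]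
    exact Finset.prod_congr rfl (fun j hj => by rw [hfix j hj])
  rw [← h1, ← h2]
  exact key

-- assume previous lemmas, restate as axioms for fast iteration (will concatenate later)
section UB
variable {Ω ι : Type*} [MeasurableSpace Ω] {μ : Measure Ω} [IsProbabilityMeasure μ]
  [Fintype ι] {q : ℝ} {X : ι → Ω → ℝ}

lemma sum_rpow_le_rpow_sum {q : ℝ} (hq : 1 ≤ q) (t : Finset ι) (x : ι → ℝ)
    (hx : ∀ i, 0 ≤ x i) : ∑ i ∈ t, x i ^ q ≤ (∑ i ∈ t, x i) ^ q := by
  classical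
  induction t using Finset.cons_induction with
  | empty => simp [Real.zero_rpow (by positivity : q ≠ 0)]
  | cons a t ha ih =>
    rw [Finset.sum_cons, Finset.sum_cons]
    calc x a ^ q + ∑ i ∈ t, x i ^ q ≤ x a ^ q + (∑ i ∈ t, x i) ^ q := by linarith
      _ ≤ (x a + ∑ i ∈ t, x i) ^ q :=
        myAdd_rpow_le (hx a) (Finset.sum_nonneg fun i _ => hx i) hq

lemma integrable_rpow_qsub (hq1 : 1 ≤ q) (hq2 : q ≤ 2) {f : Ω → ℝ} (h0 : 0 ≤ᵐ[μ] f)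
    (hint : Integrable f μ) : Integrable (fun ω => f ω ^ (q - 1)) μ := by
  refine Integrable.mono' ((integrable_const (1:ℝ)).add hint)
    (hint.aemeasurable.pow aemeasurable_const).aestronglyMeasurable ?_
  filter_upwards [h0] with ω hω
  rw [Real.norm_eq_abs, abs_of_nonneg (Real.rpow_nonneg hω _)]
  exact rpow_qsub_le hω hq1 hq2

lemma integral_rpow_qsub_le (hq1 : 1 ≤ q) (hq2 : q ≤ 2) {f : Ω → ℝ} (h0 : 0 ≤ᵐ[μ] f)
    (hint : Integrable f μ) : ∫ ω, f ω ^ (q-1) ∂μ ≤ 1 + ∫ ω, f ω ∂μ := by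
  calc ∫ ω, f ω ^ (q-1) ∂μ ≤ ∫ ω, (1 + f ω) ∂μ := by
        refine integral_mono_ae (integrable_rpow_qsub hq1 hq2 h0 hint)
          ((integrable_const _).add hint) ?_
        filter_upwards [h0] with ω hω using rpow_qsub_le hω hq1 hq2
    _ = 1 + ∫ ω, f ω ∂μ := by
        rw [integral_add (integrable_const _) hint, integral_const]; simp

lemma myUB (hq1 : 1 ≤ q) (hq2 : q ≤ 2)
    (hX0 : ∀ i, 0 ≤ᵐ[μ] X i) (hXint : ∀ i, Integrable (X i) μ)
    (hXq : ∀ i, Integrable (fun ω => X i ω ^ q) μ)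
    (hind : ∀ (t : Finset ι) (i : ι), i ∉ t →
      IndepFun (fun ω => ∑ j ∈ t, X j ω) (X i) μ)
    {M : ℝ} (hM0 : 0 ≤ M)
    (t : Finset ι) (hμM : ∑ i ∈ t, ∫ ω, X i ω ∂μ ≤ M) :
    Integrable (fun ω => (∑ j ∈ t, X j ω) ^ q) μ ∧
    ∫ ω, (∑ j ∈ t, X j ω) ^ q ∂μ ≤ ∑ i ∈ t, ∫ ω, X i ω ^ q ∂μ +
      ∑ i ∈ t, (M * (1 + ∫ ω, X i ω ∂μ) + (1 + M) * ∫ ω, X i ω ∂μ) := by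
  classical
  induction t using Finset.cons_induction with
  | empty => simp [Real.zero_rpow (by positivity : q ≠ 0)]
  | cons a t ha ih =>
    have hμnn : ∀ i, 0 ≤ ∫ ω, X i ω ∂μ := fun i => integral_nonneg_of_ae (hX0 i)
    have htM : ∑ i ∈ t, ∫ ω, X i ω ∂μ ≤ M := by
      rw [Finset.sum_cons] at hμM; linarith [hμnn a]
    obtain ⟨ihint, ihbound⟩ := ih htM
    set S : Ω → ℝ := fun ω => ∑ j ∈ t, X j ω with hS
    have hS0 : 0 ≤ᵐ[μ] S := by
      filter_upwards [ae_all_iff.2 hX0] with ω hω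
      exact Finset.sum_nonneg fun i _ => hω i
    have hSint : Integrable S μ := integrable_finset_sum _ (fun i _ => hXint i)
    have hμS : ∫ ω, S ω ∂μ = ∑ i ∈ t, ∫ ω, X i ω ∂μ :=
      integral_finset_sum _ (fun i _ => hXint i)
    have hμS0 : 0 ≤ ∫ ω, S ω ∂μ := integral_nonneg_of_ae hS0
    have hSa : IndepFun S (X a) μ := hind t a ha
    have haS : IndepFun (X a) S μ := hSa.symm
    have hmq : Measurable fun x : ℝ => x ^ (q-1) := measurable_id.pow measurable_const
    -- cross term A = X a * S^(q-1)
    have hindA : IndepFun (X a) (fun ω => S ω ^ (q-1)) μ :=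
      haS.comp measurable_id hmq
    have hintSq1 : Integrable (fun ω => S ω ^ (q-1)) μ :=
      integrable_rpow_qsub hq1 hq2 hS0 hSint
    have hintA : Integrable (fun ω => X a ω * S ω ^ (q-1)) μ :=
      hindA.integrable_mul (hXint a) hintSq1
    have hmulA : ∫ ω, X a ω * S ω ^ (q-1) ∂μ =
        (∫ ω, X a ω ∂μ) * ∫ ω, S ω ^ (q-1) ∂μ := by
      simpa [Pi.mul_apply] using hindA.integral_mul_eq_mul_integral (hXint a).aestronglyMeasurable hintSq1.aestronglyMeasurable
    have hA : ∫ ω, X a ω * S ω ^ (q-1) ∂μ ≤ (1 + M) * ∫ ω, X a ω ∂μ := by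
      rw [hmulA]
      have h1 : ∫ ω, S ω ^ (q-1) ∂μ ≤ 1 + ∫ ω, S ω ∂μ :=
        integral_rpow_qsub_le hq1 hq2 hS0 hSint
      have h2 : ∫ ω, S ω ∂μ ≤ M := by rw [hμS]; exact htM
      calc (∫ ω, X a ω ∂μ) * ∫ ω, S ω ^ (q-1) ∂μ
          ≤ (∫ ω, X a ω ∂μ) * (1 + M) := by
            apply mul_le_mul_of_nonneg_left (by linarith) (hμnn a)
        _ = (1 + M) * ∫ ω, X a ω ∂μ := by ring
    -- cross term B = X a ^(q-1) * S
    have hindB : IndepFun (fun ω => X a ω ^ (q-1)) S μ :=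
      haS.comp hmq measurable_id
    have hintXq1 : Integrable (fun ω => X a ω ^ (q-1)) μ :=
      integrable_rpow_qsub hq1 hq2 (hX0 a) (hXint a)
    have hintB : Integrable (fun ω => X a ω ^ (q-1) * S ω) μ :=
      hindB.integrable_mul hintXq1 hSint
    have hmulB : ∫ ω, X a ω ^ (q-1) * S ω ∂μ =
        (∫ ω, X a ω ^ (q-1) ∂μ) * ∫ ω, S ω ∂μ := by
      simpa [Pi.mul_apply] using hindB.integral_mul_eq_mul_integral hintXq1.aestronglyMeasurable hSint.aestronglyMeasurable
    have hB : ∫ ω, X a ω ^ (q-1) * S ω ∂μ ≤ M * (1 + ∫ ω, X a ω ∂μ) := by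
      rw [hmulB]
      have h1 : ∫ ω, X a ω ^ (q-1) ∂μ ≤ 1 + ∫ ω, X a ω ∂μ :=
        integral_rpow_qsub_le hq1 hq2 (hX0 a) (hXint a)
      have h2 : ∫ ω, S ω ∂μ ≤ M := by rw [hμS]; exact htM
      calc (∫ ω, X a ω ^ (q-1) ∂μ) * ∫ ω, S ω ∂μ
          ≤ (1 + ∫ ω, X a ω ∂μ) * M := by
            apply mul_le_mul (by linarith) h2 hμS0 (by linarith [hμnn a])
        _ = M * (1 + ∫ ω, X a ω ∂μ) := by ring
    -- pointwise bound
    have hpt : ∀ᵐ ω ∂μ, (X a ω + S ω) ^ q ≤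
        X a ω ^ q + S ω ^ q + (X a ω * S ω ^ (q-1) + X a ω ^ (q-1) * S ω) := by
      filter_upwards [hX0 a, hS0] with ω h1 h2
      exact rpow_add_le_cross h1 h2 hq1 hq2
    have hptnn : ∀ᵐ ω ∂μ, 0 ≤ (X a ω + S ω) ^ q := by
      filter_upwards [hX0 a, hS0] with ω h1 h2
      exact Real.rpow_nonneg (add_nonneg h1 h2) q
    have hbnd : Integrable (fun ω => X a ω ^ q + S ω ^ q +
        (X a ω * S ω ^ (q-1) + X a ω ^ (q-1) * S ω)) μ :=
      (((hXq a).add ihint).add (hintA.add hintB))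
    have hintcons : Integrable (fun ω => (X a ω + S ω) ^ q) μ := by
      refine Integrable.mono' hbnd
        (((hXint a).add hSint).aemeasurable.pow aemeasurable_const).aestronglyMeasurable ?_
      filter_upwards [hpt, hptnn] with ω h1 h2
      rw [Real.norm_eq_abs, abs_of_nonneg h2]; exact h1
    have hsum_eq : (fun ω => (∑ j ∈ Finset.cons a t ha, X j ω) ^ q) =
        fun ω => (X a ω + S ω) ^ q := by
      funext ω; rw [Finset.sum_cons]
    constructor
    · rw [hsum_eq]; exact hintcons
    · have h1 : ∫ ω, (∑ j ∈ Finset.cons a t ha, X j ω) ^ q ∂μ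
          = ∫ ω, (X a ω + S ω) ^ q ∂μ := by rw [hsum_eq]
      rw [h1]
      calc ∫ ω, (X a ω + S ω) ^ q ∂μ
          ≤ ∫ ω, (X a ω ^ q + S ω ^ q +
              (X a ω * S ω ^ (q-1) + X a ω ^ (q-1) * S ω)) ∂μ :=
            integral_mono_ae hintcons hbnd hpt
        _ = ∫ ω, X a ω ^ q ∂μ + ∫ ω, S ω ^ q ∂μ +
              (∫ ω, X a ω * S ω ^ (q-1) ∂μ + ∫ ω, X a ω ^ (q-1) * S ω ∂μ) := by
            have h1 : Integrable (fun ω => X a ω ^ q + S ω ^ q) μ := (hXq a).add ihint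
            have h2 : Integrable (fun ω => X a ω * S ω ^ (q-1) + X a ω ^ (q-1) * S ω) μ :=
              hintA.add hintB
            rw [integral_add h1 h2, integral_add (hXq a) ihint, integral_add hintA hintB]
        _ ≤ ∑ i ∈ Finset.cons a t ha, ∫ ω, X i ω ^ q ∂μ +
              ∑ i ∈ Finset.cons a t ha, (M * (1 + ∫ ω, X i ω ∂μ) +
                (1 + M) * ∫ ω, X i ω ∂μ) := by
            rw [Finset.sum_cons, Finset.sum_cons]
            linarith [ihbound, hA, hB]

lemma myLB (hq1 : 1 ≤ q) (hX0 : ∀ i, 0 ≤ᵐ[μ] X i)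
    (hXq : ∀ i, Integrable (fun ω => X i ω ^ q) μ)
    (t : Finset ι) (hSq : Integrable (fun ω => (∑ j ∈ t, X j ω) ^ q) μ) :
    ∑ i ∈ t, ∫ ω, X i ω ^ q ∂μ ≤ ∫ ω, (∑ j ∈ t, X j ω) ^ q ∂μ := by
  have : ∑ i ∈ t, ∫ ω, X i ω ^ q ∂μ = ∫ ω, ∑ i ∈ t, X i ω ^ q ∂μ :=
    (integral_finset_sum _ (fun i _ => hXq i)).symm
  rw [this]
  refine integral_mono_ae (integrable_finset_sum _ (fun i _ => hXq i)) hSq ?_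
  filter_upwards [ae_all_iff.2 hX0] with ω hω
  exact sum_rpow_le_rpow_sum hq1 t (fun i => X i ω) hω
end UB

lemma dist_transfer {Ω : Type*} [MeasureSpace Ω] [IsProbabilityMeasure (ℙ : Measure Ω)]
    {W V : Ω → ℝ} (hWmeas : Measurable W) (hVmeas : Measurable V)
    (hmap : Measure.map V ℙ = Measure.map W ℙ) (hW0 : ∀ ω, 0 ≤ W ω)
    {q : ℝ} (hq1 : 1 ≤ q) (hWq : Integrable (fun ω => W ω ^ q) ℙ) :
    (0 ≤ᵐ[ℙ] V) ∧ Integrable V ℙ ∧ (∫ ω, V ω ∂ℙ = ∫ ω, W ω ∂ℙ) ∧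
      Integrable (fun ω => V ω ^ q) ℙ ∧ (∫ ω, V ω ^ q ∂ℙ = ∫ ω, W ω ^ q ∂ℙ) := by
  have hWint : Integrable W ℙ := by
    refine Integrable.mono' ((integrable_const (1:ℝ)).add hWq)
      hWmeas.aestronglyMeasurable ?_
    filter_upwards with ω
    rw [Real.norm_eq_abs, abs_of_nonneg (hW0 ω)]
    exact le_one_add_rpow (hW0 ω) hq1
  have hmq : Measurable fun x : ℝ => x ^ q := measurable_id.pow measurable_const
  have hV0 : 0 ≤ᵐ[ℙ] V := by
    have h1 : ℙ (V ⁻¹' Set.Iio 0) = ℙ (W ⁻¹' Set.Iio 0) := by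
      rw [← Measure.map_apply hVmeas measurableSet_Iio,
        ← Measure.map_apply hWmeas measurableSet_Iio, hmap]
    have h2 : W ⁻¹' Set.Iio 0 = ∅ := by
      ext ω; simp only [Set.mem_preimage, Set.mem_Iio, Set.mem_empty_iff_false, iff_false,
        not_lt]
      exact hW0 ω
    rw [Filter.EventuallyLE, ae_iff]
    have h3 : {ω | ¬ (0:Ω → ℝ) ω ≤ V ω} = V ⁻¹' Set.Iio 0 := by
      ext ω; simp [not_le]
    rw [h3, h1, h2]; simp
  have hVint : Integrable V ℙ := by
    have h1 : Integrable id (Measure.map V ℙ) ↔ Integrable V ℙ := by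
      rw [integrable_map_measure aestronglyMeasurable_id hVmeas.aemeasurable]
      exact Iff.rfl
    have h2 : Integrable id (Measure.map W ℙ) ↔ Integrable W ℙ := by
      rw [integrable_map_measure aestronglyMeasurable_id hWmeas.aemeasurable]
      exact Iff.rfl
    rw [← h1, hmap, h2]; exact hWint
  have hVmean : ∫ ω, V ω ∂ℙ = ∫ ω, W ω ∂ℙ := by
    have h1 : ∫ ω, V ω ∂ℙ = ∫ x, x ∂(Measure.map V ℙ) :=
      (integral_map hVmeas.aemeasurable aestronglyMeasurable_id).symm
    have h2 : ∫ x, x ∂(Measure.map W ℙ) = ∫ ω, W ω ∂ℙ :=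
      integral_map hWmeas.aemeasurable aestronglyMeasurable_id
    rw [h1, hmap, h2]
  have hVq : Integrable (fun ω => V ω ^ q) ℙ := by
    have h1 : Integrable (fun x : ℝ => x ^ q) (Measure.map V ℙ) ↔
        Integrable (fun ω => V ω ^ q) ℙ := by
      rw [integrable_map_measure hmq.aestronglyMeasurable hVmeas.aemeasurable]
      exact Iff.rfl
    have h2 : Integrable (fun x : ℝ => x ^ q) (Measure.map W ℙ) ↔
        Integrable (fun ω => W ω ^ q) ℙ := by
      rw [integrable_map_measure hmq.aestronglyMeasurable hWmeas.aemeasurable]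
      exact Iff.rfl
    rw [← h1, hmap, h2]; exact hWq
  have hVqmean : ∫ ω, V ω ^ q ∂ℙ = ∫ ω, W ω ^ q ∂ℙ := by
    have h1 : ∫ ω, V ω ^ q ∂ℙ = ∫ x, x ^ q ∂(Measure.map V ℙ) :=
      (integral_map hVmeas.aemeasurable hmq.aestronglyMeasurable).symm
    have h2 : ∫ x, x ^ q ∂(Measure.map W ℙ) = ∫ ω, W ω ^ q ∂ℙ :=
      integral_map hWmeas.aemeasurable hmq.aestronglyMeasurable
    rw [h1, hmap, h2]
  exact ⟨hV0, hVint, hVmean, hVq, hVqmean⟩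


lemma badicY_zero {Ω : Type*} (b : ℕ) (Wv : List (Fin b) → Ω → ℝ) :
    badicY b Wv 0 = fun _ => 1 := by
  funext ω
  simp [badicY]

lemma badicY_succ {Ω : Type*} (b : ℕ) (Wv : List (Fin b) → Ω → ℝ) (n : ℕ) :
    badicY b Wv (n + 1) =
      fun ω => ∑ i : Fin b, (b:ℝ)⁻¹ * (Wv [i] ω * badicY b (fun v => Wv (i :: v)) n ω) := by
  funext ω
  unfold badicY
  have hofn : ∀ (i : Fin b) (v' : Fin n → Fin b),
      List.ofFn (Fin.cons i v' : Fin (n+1) → Fin b) = i :: List.ofFn v' := by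
    intro i v'
    rw [List.ofFn_succ]
    congr 1
  have hsum : ∑ v : Fin (n+1) → Fin b, ∏ k ∈ Finset.range (n+1),
      Wv ((List.ofFn v).take (k + 1)) ω
      = ∑ i : Fin b, (∑ v' : Fin n → Fin b, ∏ k ∈ Finset.range n,
          Wv (i :: (List.ofFn v').take (k + 1)) ω) * Wv [i] ω := by
    rw [← Fintype.sum_equiv (Fin.consEquiv (fun _ : Fin (n+1) => Fin b))
      (fun p => ∏ k ∈ Finset.range (n+1), Wv ((List.ofFn (Fin.cons p.1 p.2)).take (k + 1)) ω)
      (fun v => ∏ k ∈ Finset.range (n+1), Wv ((List.ofFn v).take (k + 1)) ω)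
      (fun p => rfl)]
    rw [Fintype.sum_prod_type]
    refine Finset.sum_congr rfl fun i _ => ?_
    rw [show ∑ y : Fin n → Fin b, ∏ k ∈ Finset.range (n+1),
        Wv ((List.ofFn (Fin.cons ((i, y).1) ((i, y).2))).take (k + 1)) ω
      = ∑ v' : Fin n → Fin b, (∏ k ∈ Finset.range n,
          Wv (i :: (List.ofFn v').take (k + 1)) ω) * Wv [i] ω from
      Finset.sum_congr rfl fun v' _ => ?_]
    · rw [Finset.sum_mul]
    · rw [Finset.prod_range_succ' (fun k => Wv ((List.ofFn (Fin.cons i v')).take (k + 1)) ω)]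
      congr 1
      · refine Finset.prod_congr rfl fun k _ => ?_
        rw [hofn, List.take_succ_cons]
      · rw [hofn]
        norm_num
  rw [hsum, Finset.mul_sum]
  refine Finset.sum_congr rfl fun i _ => ?_
  simp only [badicY]
  rw [pow_succ, mul_inv]
  ring


section casc
variable {b n : ℕ}

/-- Words used by the level-`n` cascade in the subtree rooted at letter `i`. -/
def cascT (b n : ℕ) (i : Fin b) : Finset {v : List (Fin b) // v ≠ []} :=
  Finset.image (fun p : (Fin n → Fin b) × Fin n =>
    ⟨i :: (List.ofFn p.1).take (p.2.1 + 1), by simp⟩) Finset.univ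

def cascB (b n : ℕ) (i : Fin b) : Finset {v : List (Fin b) // v ≠ []} :=
  insert ⟨[i], by simp⟩ (cascT b n i)

lemma mem_cascB {i : Fin b} {x : {v : List (Fin b) // v ≠ []}} (hx : x ∈ cascB b n i) :
    ∃ u, x.1 = i :: u := by
  rcases Finset.mem_insert.mp hx with h | h
  · exact ⟨[], by rw [h]⟩
  · obtain ⟨p, -, rfl⟩ := Finset.mem_image.mp h
    exact ⟨_, rfl⟩

lemma cascB_disjoint {i j : Fin b} (hij : i ≠ j) : Disjoint (cascB b n i) (cascB b n j) := by
  rw [Finset.disjoint_left]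
  intro x hxi hxj
  obtain ⟨u, hu⟩ := mem_cascB hxi
  obtain ⟨u', hu'⟩ := mem_cascB hxj
  rw [hu] at hu'
  exact hij (by injection hu')

lemma not_mem_cascT {i : Fin b} : (⟨[i], by simp⟩ : {v : List (Fin b) // v ≠ []}) ∉ cascT b n i := by
  intro h
  obtain ⟨p, -, hp⟩ := Finset.mem_image.mp h
  have h1 : i :: (List.ofFn p.1).take (p.2.1 + 1) = [i] := congrArg Subtype.val hp
  have h2 : (List.ofFn p.1).take (p.2.1 + 1) = [] := by injection h1
  have h3 : ((List.ofFn p.1).take (p.2.1 + 1)).length = 0 := by rw [h2]; rfl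
  rw [List.length_take, List.length_ofFn] at h3
  have := p.2.2
  omega

noncomputable def cascFZ (b n : ℕ) (i : Fin b) (g : cascT b n i → ℝ) : ℝ :=
  ((b:ℝ)^n)⁻¹ * ∑ v : Fin n → Fin b, ∏ k : Fin n,
    g ⟨⟨i :: (List.ofFn v).take (k.1 + 1), by simp⟩,
      Finset.mem_image.mpr ⟨(v, k), Finset.mem_univ _, rfl⟩⟩

lemma cascFZ_meas (i : Fin b) : Measurable (cascFZ b n i) := by
  unfold cascFZ
  apply Measurable.const_mul
  apply Finset.measurable_sum
  intro v _
  apply Finset.measurable_prod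
  intro k _
  exact measurable_pi_apply _

lemma cascFZ_eq {Ω : Type*} (Wv : List (Fin b) → Ω → ℝ) (i : Fin b) :
    (fun ω => cascFZ b n i (fun x => Wv x.1.1 ω)) = badicY b (fun v => Wv (i :: v)) n := by
  funext ω
  unfold cascFZ badicY
  congr 1
  refine Finset.sum_congr rfl fun v _ => ?_
  exact Fin.prod_univ_eq_prod_range (fun k => Wv (i :: (List.ofFn v).take (k + 1)) ω) n

noncomputable def cascFX (b n : ℕ) (i : Fin b) (g : cascB b n i → ℝ) : ℝ :=
  (b:ℝ)⁻¹ * (g ⟨⟨[i], by simp⟩, Finset.mem_insert_self _ _⟩ *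
    cascFZ b n i (fun x => g ⟨x.1, Finset.mem_insert_of_mem x.2⟩))

lemma cascFX_meas (i : Fin b) : Measurable (cascFX b n i) := by
  apply Measurable.const_mul
  exact (measurable_pi_apply _).mul
    ((cascFZ_meas i).comp (measurable_pi_lambda _ fun x => measurable_pi_apply _))

lemma cascFX_eq {Ω : Type*} (Wv : List (Fin b) → Ω → ℝ) (i : Fin b) :
    (fun ω => cascFX b n i (fun x => Wv x.1.1 ω)) =
      fun ω => (b:ℝ)⁻¹ * (Wv [i] ω * badicY b (fun v => Wv (i :: v)) n ω) := by
  funext ω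
  unfold cascFX
  rw [← cascFZ_eq Wv i]

section indep
variable {Ω : Type*} [MeasureSpace Ω] [IsProbabilityMeasure (ℙ : Measure Ω)]
  {Wv : List (Fin b) → Ω → ℝ}

lemma casc_indep_head (hmeas : ∀ v, Measurable (Wv v))
    (hindep : iIndepFun
      (fun v : {v : List (Fin b) // v ≠ []} => Wv v.1) ℙ) (i : Fin b) :
    IndepFun (Wv [i]) (badicY b (fun v => Wv (i :: v)) n) ℙ := by
  have hdisj : Disjoint {(⟨[i], by simp⟩ : {v : List (Fin b) // v ≠ []})} (cascT b n i) :=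
    Finset.disjoint_singleton_left.mpr not_mem_cascT
  have h := (hindep.indepFun_finset _ _ hdisj (fun v => hmeas v.1)).comp
    (measurable_pi_apply (⟨⟨[i], by simp⟩, Finset.mem_singleton_self _⟩ :
      ({(⟨[i], by simp⟩ : {v : List (Fin b) // v ≠ []})} :
        Finset {v : List (Fin b) // v ≠ []}))) (cascFZ_meas i)
  have heq : ((fun g : ({(⟨[i], by simp⟩ : {v : List (Fin b) // v ≠ []})} :
      Finset {v : List (Fin b) // v ≠ []}) → ℝ =>
        g ⟨⟨[i], by simp⟩, Finset.mem_singleton_self _⟩) ∘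
      (fun ω (x : ({(⟨[i], by simp⟩ : {v : List (Fin b) // v ≠ []})} :
        Finset {v : List (Fin b) // v ≠ []})) => Wv x.1.1 ω)) = Wv [i] := rfl
  rw [heq] at h
  have heq2 : (cascFZ b n i ∘ fun ω (x : cascT b n i) => Wv x.1.1 ω) =
      badicY b (fun v => Wv (i :: v)) n := cascFZ_eq Wv i
  rwa [heq2] at h

lemma casc_indep_sum (hmeas : ∀ v, Measurable (Wv v))
    (hindep : iIndepFun
      (fun v : {v : List (Fin b) // v ≠ []} => Wv v.1) ℙ)
    (t : Finset (Fin b)) (i : Fin b) (hi : i ∉ t) :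
    IndepFun
      (fun ω => ∑ j ∈ t, (b:ℝ)⁻¹ * (Wv [j] ω * badicY b (fun v => Wv (j :: v)) n ω))
      (fun ω => (b:ℝ)⁻¹ * (Wv [i] ω * badicY b (fun v => Wv (i :: v)) n ω)) ℙ := by
  classical
  set S : Finset {v : List (Fin b) // v ≠ []} := t.biUnion (cascB b n) with hSdef
  have hdisj : Disjoint S (cascB b n i) := by
    rw [Finset.disjoint_biUnion_left]
    exact fun j hj => cascB_disjoint (fun h => hi (h ▸ hj))
  set FS : (S → ℝ) → ℝ := fun g => ∑ j ∈ t.attach,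
    cascFX b n j.1 (fun x => g ⟨x.1, Finset.mem_biUnion.mpr ⟨j.1, j.2, x.2⟩⟩) with hFSdef
  have hFSmeas : Measurable FS :=
    Finset.measurable_sum _ fun j _ =>
      (cascFX_meas j.1).comp (measurable_pi_lambda _ fun x => measurable_pi_apply _)
  have h := (hindep.indepFun_finset _ _ hdisj (fun v => hmeas v.1)).comp hFSmeas
    (cascFX_meas i)
  have heq1 : (FS ∘ fun ω (x : S) => Wv x.1.1 ω) =
      fun ω => ∑ j ∈ t, (b:ℝ)⁻¹ * (Wv [j] ω * badicY b (fun v => Wv (j :: v)) n ω) := by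
    funext ω
    show ∑ j ∈ t.attach, cascFX b n j.1 (fun x => Wv x.1.1 ω) = _
    rw [← Finset.sum_attach t
      (fun j => (b:ℝ)⁻¹ * (Wv [j] ω * badicY b (fun v => Wv (j :: v)) n ω))]
    refine Finset.sum_congr rfl fun j _ => ?_
    exact congrFun (cascFX_eq Wv j.1) ω
  have heq2 : (cascFX b n i ∘ fun ω (x : cascB b n i) => Wv x.1.1 ω) =
      fun ω => (b:ℝ)⁻¹ * (Wv [i] ω * badicY b (fun v => Wv (i :: v)) n ω) :=
    cascFX_eq Wv i
  rwa [heq1, heq2] at h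

end indep
end casc


lemma cascade_props {Ω : Type*} [MeasureSpace Ω] [IsProbabilityMeasure (ℙ : Measure Ω)]
    (b : ℕ) (hb : 2 ≤ b) (W : Ω → ℝ) (hWmeas : Measurable W) (hW0 : ∀ ω, 0 ≤ W ω)
    (hWmean : ∫ ω, W ω ∂ℙ = 1) (q : ℝ) (hq1 : 1 < q) (hq2 : q ≤ 2)
    (hWq : Integrable (fun ω => W ω ^ q) ℙ)
    (hsup : (b:ℝ) ^ (q-1) < ∫ ω, W ω ^ q ∂ℙ)
    (ρ D : ℝ) (hρ : ρ = (∫ ω, W ω ^ q ∂ℙ) / (b:ℝ) ^ (q-1))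
    (hD : D = ((b:ℝ) + 3) / (ρ - 1)) :
    ∀ n (Wv : List (Fin b) → Ω → ℝ), (∀ v, Measurable (Wv v)) →
      iIndepFun
        (fun v : {v : List (Fin b) // v ≠ []} => Wv v.1) ℙ →
      (∀ v, v ≠ [] → Measure.map (Wv v) ℙ = Measure.map W ℙ) →
      (0 ≤ᵐ[ℙ] badicY b Wv n) ∧ Integrable (badicY b Wv n) ℙ ∧
      (∫ ω, badicY b Wv n ω ∂ℙ = 1) ∧ Integrable (fun ω => badicY b Wv n ω ^ q) ℙ ∧
      ρ ^ n ≤ ∫ ω, badicY b Wv n ω ^ q ∂ℙ ∧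
      ∫ ω, badicY b Wv n ω ^ q ∂ℙ ≤ (1 + D) * ρ ^ n - D := by
  have hbR : (0:ℝ) < b := by
    have : 0 < b := by omega
    exact_mod_cast this
  have hbne : (b:ℝ) ≠ 0 := ne_of_gt hbR
  have hbq : (0:ℝ) < (b:ℝ) ^ (q-1) := Real.rpow_pos_of_pos hbR _
  have hmq0 : (0:ℝ) < ∫ ω, W ω ^ q ∂ℙ := lt_trans hbq hsup
  have hρ1 : 1 < ρ := by
    rw [hρ, lt_div_iff₀ hbq]
    linarith
  have hD0 : 0 ≤ D := by
    rw [hD]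
    apply div_nonneg (by positivity)
    linarith
  have hρne : ρ - 1 ≠ 0 := by linarith
  have hρD : ρ * D = D + ((b:ℝ) + 3) := by
    rw [hD]
    field_simp
    ring
  intro n
  induction n with
  | zero =>
    intro Wv _ _ _
    rw [badicY_zero]
    have h1 : (fun ω : Ω => (1:ℝ) ^ q) = fun _ => (1:ℝ) := by
      funext ω; exact Real.one_rpow q
    refine ⟨Filter.Eventually.of_forall fun ω => zero_le_one, integrable_const 1, by simp,
      ?_, ?_, ?_⟩
    · rw [h1]; exact integrable_const 1
    · rw [h1]; simp
    · rw [h1]; simp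
  | succ n IH =>
    intro Wv hmeas hindep hdist
    have hinj : ∀ i : Fin b, Function.Injective
        (fun v : {v : List (Fin b) // v ≠ []} =>
          (⟨i :: v.1, by simp⟩ : {v : List (Fin b) // v ≠ []})) := by
      intro i v w hvw
      apply Subtype.ext
      have := congrArg Subtype.val hvw
      simpa using this
    set Z : Fin b → Ω → ℝ := fun i => badicY b (fun v => Wv (i :: v)) n with hZdef
    have HZ : ∀ i : Fin b, (0 ≤ᵐ[ℙ] Z i) ∧ Integrable (Z i) ℙ ∧
        (∫ ω, Z i ω ∂ℙ = 1) ∧ Integrable (fun ω => Z i ω ^ q) ℙ ∧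
        ρ ^ n ≤ ∫ ω, Z i ω ^ q ∂ℙ ∧ ∫ ω, Z i ω ^ q ∂ℙ ≤ (1 + D) * ρ ^ n - D :=
      fun i => IH (fun v => Wv (i :: v)) (fun v => hmeas _)
        (myIIndepFun_reindex _ (hinj i) hindep) (fun v hv => hdist (i :: v) (by simp))
    set X : Fin b → Ω → ℝ := fun i ω => (b:ℝ)⁻¹ * (Wv [i] ω * Z i ω) with hXdef
    have hdecomp : badicY b Wv (n+1) = fun ω => ∑ i : Fin b, X i ω := badicY_succ b Wv n
    have HW : ∀ i : Fin b, (0 ≤ᵐ[ℙ] Wv [i]) ∧ Integrable (Wv [i]) ℙ ∧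
        (∫ ω, Wv [i] ω ∂ℙ = ∫ ω, W ω ∂ℙ) ∧ Integrable (fun ω => Wv [i] ω ^ q) ℙ ∧
        (∫ ω, Wv [i] ω ^ q ∂ℙ = ∫ ω, W ω ^ q ∂ℙ) :=
      fun i => dist_transfer hWmeas (hmeas [i]) (hdist [i] (by simp)) hW0 hq1.le hWq
    have hmq : Measurable fun x : ℝ => x ^ q := measurable_id.pow measurable_const
    have hindhd : ∀ i : Fin b, IndepFun (Wv [i]) (Z i) ℙ :=
      fun i => casc_indep_head hmeas hindep i
    have hX0 : ∀ i, 0 ≤ᵐ[ℙ] X i := by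
      intro i
      filter_upwards [(HW i).1, (HZ i).1] with ω h1 h2
      exact mul_nonneg (by positivity) (mul_nonneg h1 h2)
    have hXint : ∀ i, Integrable (X i) ℙ :=
      fun i => ((hindhd i).integrable_mul (HW i).2.1 (HZ i).2.1).const_mul _
    have hXmean : ∀ i, ∫ ω, X i ω ∂ℙ = (b:ℝ)⁻¹ := by
      intro i
      have hmul : ∫ ω, Wv [i] ω * Z i ω ∂ℙ = (∫ ω, Wv [i] ω ∂ℙ) * ∫ ω, Z i ω ∂ℙ := by
        simpa using (hindhd i).integral_mul_eq_mul_integral (HW i).2.1.aestronglyMeasurable (HZ i).2.1.aestronglyMeasurable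
      calc ∫ ω, X i ω ∂ℙ = (b:ℝ)⁻¹ * ∫ ω, Wv [i] ω * Z i ω ∂ℙ :=
            integral_const_mul _ _
        _ = (b:ℝ)⁻¹ := by rw [hmul, (HW i).2.2.1, hWmean, (HZ i).2.2.1]; ring
    -- q-th moments
    have hXqeq : ∀ i, (fun ω => X i ω ^ q) =ᵐ[ℙ]
        fun ω => ((b:ℝ)⁻¹) ^ q * (Wv [i] ω ^ q * Z i ω ^ q) := by
      intro i
      filter_upwards [(HW i).1, (HZ i).1] with ω h1 h2
      show ((b:ℝ)⁻¹ * (Wv [i] ω * Z i ω)) ^ q = _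
      rw [Real.mul_rpow (by positivity) (mul_nonneg h1 h2), Real.mul_rpow h1 h2]
    have hindq : ∀ i, IndepFun (fun ω => Wv [i] ω ^ q) (fun ω => Z i ω ^ q) ℙ :=
      fun i => (hindhd i).comp hmq hmq
    have hPint : ∀ i, Integrable (fun ω => Wv [i] ω ^ q * Z i ω ^ q) ℙ :=
      fun i => (hindq i).integrable_mul (HW i).2.2.2.1 (HZ i).2.2.2.1
    have hXq : ∀ i, Integrable (fun ω => X i ω ^ q) ℙ :=
      fun i => (((hPint i).const_mul _)).congr (hXqeq i).symm
    have hXq_val : ∀ i, ∫ ω, X i ω ^ q ∂ℙ =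
        ((b:ℝ)⁻¹) ^ q * ((∫ ω, W ω ^ q ∂ℙ) * ∫ ω, Z i ω ^ q ∂ℙ) := by
      intro i
      rw [integral_congr_ae (hXqeq i), integral_const_mul]
      congr 1
      have hmul : ∫ ω, Wv [i] ω ^ q * Z i ω ^ q ∂ℙ =
          (∫ ω, Wv [i] ω ^ q ∂ℙ) * ∫ ω, Z i ω ^ q ∂ℙ := by
        simpa using (hindq i).integral_mul_eq_mul_integral (HW i).2.2.2.1.aestronglyMeasurable (HZ i).2.2.2.1.aestronglyMeasurable
      rw [hmul, (HW i).2.2.2.2]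
    have hind : ∀ (t : Finset (Fin b)) (i : Fin b), i ∉ t →
        IndepFun (fun ω => ∑ j ∈ t, X j ω) (X i) ℙ :=
      fun t i hi => casc_indep_sum hmeas hindep t i hi
    have hμM : ∑ i : Fin b, ∫ ω, X i ω ∂ℙ ≤ 1 := by
      rw [Finset.sum_congr rfl fun i _ => hXmean i]
      rw [Finset.sum_const, Finset.card_univ, Fintype.card_fin, nsmul_eq_mul]
      rw [mul_inv_cancel₀ hbne]
    obtain ⟨hYq_int, hYq_ub⟩ := myUB hq1.le hq2 hX0 hXint hXq hind zero_le_one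
      Finset.univ hμM
    have hYq_lb := myLB (μ := (ℙ : Measure Ω)) hq1.le hX0 hXq Finset.univ hYq_int
    -- sums of q-th moments
    have hcb0 : (0:ℝ) ≤ ((b:ℝ)⁻¹) ^ q := Real.rpow_nonneg (by positivity) q
    have hkey : (b:ℝ) * (((b:ℝ)⁻¹) ^ q * (∫ ω, W ω ^ q ∂ℙ)) = ρ := by
      rw [hρ, Real.inv_rpow hbR.le]
      rw [show ((b:ℝ) ^ q)⁻¹ = (b:ℝ) ^ (-q) by rw [Real.rpow_neg hbR.le]]
      rw [show (b:ℝ) * ((b:ℝ) ^ (-q) * (∫ ω, W ω ^ q ∂ℙ)) =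
        ((b:ℝ) ^ (1:ℝ) * (b:ℝ) ^ (-q)) * (∫ ω, W ω ^ q ∂ℙ) by rw [Real.rpow_one]; ring]
      rw [← Real.rpow_add hbR]
      rw [show (1:ℝ) + -q = -(q-1) by ring, Real.rpow_neg hbR.le]
      rw [div_eq_mul_inv]
      ring
    have hsum_lb : ρ ^ (n+1) ≤ ∑ i : Fin b, ∫ ω, X i ω ^ q ∂ℙ := by
      have h1 : ∀ i : Fin b, ((b:ℝ)⁻¹) ^ q * ((∫ ω, W ω ^ q ∂ℙ) * ρ ^ n) ≤
          ∫ ω, X i ω ^ q ∂ℙ := by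
        intro i
        rw [hXq_val i]
        exact mul_le_mul_of_nonneg_left
          (mul_le_mul_of_nonneg_left (HZ i).2.2.2.2.1 hmq0.le) hcb0
      calc ρ ^ (n+1) = (b:ℝ) * (((b:ℝ)⁻¹) ^ q * ((∫ ω, W ω ^ q ∂ℙ) * ρ ^ n)) := by
            rw [pow_succ]
            rw [← hkey]
            ring
        _ = ∑ _i : Fin b, ((b:ℝ)⁻¹) ^ q * ((∫ ω, W ω ^ q ∂ℙ) * ρ ^ n) := by
            rw [Finset.sum_const, Finset.card_univ, Fintype.card_fin, nsmul_eq_mul]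
        _ ≤ ∑ i : Fin b, ∫ ω, X i ω ^ q ∂ℙ := Finset.sum_le_sum fun i _ => h1 i
    have hsum_ub : ∑ i : Fin b, ∫ ω, X i ω ^ q ∂ℙ ≤ ρ * ((1 + D) * ρ ^ n - D) := by
      have h1 : ∀ i : Fin b, ∫ ω, X i ω ^ q ∂ℙ ≤
          ((b:ℝ)⁻¹) ^ q * ((∫ ω, W ω ^ q ∂ℙ) * ((1 + D) * ρ ^ n - D)) := by
        intro i
        rw [hXq_val i]
        exact mul_le_mul_of_nonneg_left
          (mul_le_mul_of_nonneg_left (HZ i).2.2.2.2.2 hmq0.le) hcb0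
      calc ∑ i : Fin b, ∫ ω, X i ω ^ q ∂ℙ
          ≤ ∑ _i : Fin b, ((b:ℝ)⁻¹) ^ q * ((∫ ω, W ω ^ q ∂ℙ) * ((1 + D) * ρ ^ n - D)) :=
            Finset.sum_le_sum fun i _ => h1 i
        _ = (b:ℝ) * (((b:ℝ)⁻¹) ^ q * ((∫ ω, W ω ^ q ∂ℙ) * ((1 + D) * ρ ^ n - D))) := by
            rw [Finset.sum_const, Finset.card_univ, Fintype.card_fin, nsmul_eq_mul]
        _ = ρ * ((1 + D) * ρ ^ n - D) := by rw [← hkey]; ring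
    have hextra : ∑ i : Fin b, ((1:ℝ) * (1 + ∫ ω, X i ω ∂ℙ) + (1 + 1) * ∫ ω, X i ω ∂ℙ)
        = (b:ℝ) + 3 := by
      rw [Finset.sum_congr rfl fun i _ => by rw [hXmean i]]
      rw [Finset.sum_const, Finset.card_univ, Fintype.card_fin, nsmul_eq_mul]
      field_simp
      ring
    refine ⟨?_, ?_, ?_, ?_, ?_, ?_⟩
    · simp only [hdecomp]
      filter_upwards [ae_all_iff.2 hX0] with ω hω
      exact Finset.sum_nonneg fun i _ => hω i
    · simp only [hdecomp]
      exact integrable_finset_sum _ fun i _ => hXint i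
    · simp only [hdecomp]
      rw [integral_finset_sum _ fun i _ => hXint i]
      rw [Finset.sum_congr rfl fun i _ => hXmean i]
      rw [Finset.sum_const, Finset.card_univ, Fintype.card_fin, nsmul_eq_mul]
      exact mul_inv_cancel₀ hbne
    · simp only [hdecomp]
      exact hYq_int
    · simp only [hdecomp]
      exact le_trans hsum_lb hYq_lb
    · simp only [hdecomp]
      calc ∫ ω, (∑ i : Fin b, X i ω) ^ q ∂ℙ
          ≤ ∑ i : Fin b, ∫ ω, X i ω ^ q ∂ℙ +
            ∑ i : Fin b, ((1:ℝ) * (1 + ∫ ω, X i ω ∂ℙ) + (1 + 1) * ∫ ω, X i ω ∂ℙ) := hYq_ub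
        _ ≤ ρ * ((1 + D) * ρ ^ n - D) + ((b:ℝ) + 3) := by
            rw [hextra]
            linarith [hsum_ub]
        _ = (1 + D) * ρ ^ (n+1) - D := by
            rw [pow_succ]
            nlinarith [hρD]

set_option maxHeartbeats 1000000 in
/-- Proposition 1.4 (2), the supercritical case for `1 < q ≤ 2`: if
`b^{q-1} < E[W^q] < ∞`, then `log E[Y_n^q] / n → log (E[W^q] / b^{q-1})`. -/
theorem moments_of_cascade_supercritical_limit
    {Ω : Type*} [MeasureSpace Ω] [IsProbabilityMeasure (ℙ : Measure Ω)]
    (b : ℕ) (hb : 2 ≤ b)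
    (W : Ω → ℝ) (hWmeas : Measurable W) (hW0 : ∀ ω, 0 ≤ W ω)
    (hWmean : ∫ ω, W ω ∂ℙ = 1)
    (Wv : List (Fin b) → Ω → ℝ)
    (hmeas : ∀ v, Measurable (Wv v))
    (hindep : iIndepFun
      (fun v : {v : List (Fin b) // v ≠ []} => Wv v.1) ℙ)
    (hdist : ∀ v : List (Fin b), v ≠ [] → Measure.map (Wv v) ℙ = Measure.map W ℙ)
    (q : ℝ) (hq1 : 1 < q) (hq2 : q ≤ 2)
    (hWq : Integrable (fun ω => W ω ^ q) ℙ)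
    (hsup : (b : ℝ) ^ (q - 1) < ∫ ω, W ω ^ q ∂ℙ) :
    Tendsto (fun n : ℕ => Real.log (∫ ω, badicY b Wv n ω ^ q ∂ℙ) / n) atTop
      (nhds (Real.log ((∫ ω, W ω ^ q ∂ℙ) / (b : ℝ) ^ (q - 1)))) := by
  set ρ : ℝ := (∫ ω, W ω ^ q ∂ℙ) / (b:ℝ) ^ (q-1) with hρ
  set D : ℝ := ((b:ℝ) + 3) / (ρ - 1) with hD
  have hbR : (0:ℝ) < b := by
    have : 0 < b := by omega
    exact_mod_cast this
  have hbq : (0:ℝ) < (b:ℝ) ^ (q-1) := Real.rpow_pos_of_pos hbR _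
  have hmq0 : (0:ℝ) < ∫ ω, W ω ^ q ∂ℙ := lt_trans hbq hsup
  have hρ1 : 1 < ρ := by
    rw [hρ, lt_div_iff₀ hbq]
    linarith
  have hρ0 : 0 < ρ := by linarith
  have hD0 : 0 ≤ D := by
    rw [hD]
    apply div_nonneg (by positivity)
    linarith
  have hK1 : (1:ℝ) ≤ 1 + D := by linarith
  have hK0 : (0:ℝ) < 1 + D := by linarith
  have H := cascade_props b hb W hWmeas hW0 hWmean q hq1 hq2 hWq hsup ρ D hρ hD
  set a : ℕ → ℝ := fun n => ∫ ω, badicY b Wv n ω ^ q ∂ℙ with ha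
  have hlb : ∀ n, ρ ^ n ≤ a n := fun n => (H n Wv hmeas hindep hdist).2.2.2.2.1
  have hub : ∀ n, a n ≤ (1 + D) * ρ ^ n :=
    fun n => le_trans (H n Wv hmeas hindep hdist).2.2.2.2.2
      (by nlinarith [pow_pos hρ0 n])
  have ha0 : ∀ n, 0 < a n := fun n => lt_of_lt_of_le (pow_pos hρ0 n) (hlb n)
  have hlow : ∀ᶠ n : ℕ in atTop, Real.log ρ ≤ Real.log (a n) / n := by
    filter_upwards [eventually_ge_atTop 1] with n hn
    have hn0 : (0:ℝ) < n := by exact_mod_cast hn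
    rw [le_div_iff₀ hn0]
    have := Real.log_le_log (pow_pos hρ0 n) (hlb n)
    rwa [Real.log_pow, mul_comm] at this
  have hhigh : ∀ᶠ n : ℕ in atTop,
      Real.log (a n) / n ≤ Real.log (1 + D) / n + Real.log ρ := by
    filter_upwards [eventually_ge_atTop 1] with n hn
    have hn0 : (0:ℝ) < n := by exact_mod_cast hn
    have h1 : Real.log (a n) ≤ Real.log (1 + D) + n * Real.log ρ := by
      have h2 := Real.log_le_log (ha0 n) (hub n)
      rwa [Real.log_mul (ne_of_gt hK0) (ne_of_gt (pow_pos hρ0 n)), Real.log_pow] at h2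
    rw [div_le_iff₀ hn0]
    calc Real.log (a n) ≤ Real.log (1 + D) + n * Real.log ρ := h1
      _ = (Real.log (1 + D) / n + Real.log ρ) * n := by field_simp
  have htop : Tendsto (fun n : ℕ => Real.log (1 + D) / n + Real.log ρ) atTop
      (nhds (Real.log ρ)) := by
    have h1 : Tendsto (fun n : ℕ => Real.log (1 + D) / n) atTop (nhds 0) :=
      tendsto_const_div_atTop_nhds_zero_nat _
    have := h1.add (tendsto_const_nhds (x := Real.log ρ) (f := atTop))
    rwa [zero_add] at this
  exact tendsto_of_tendsto_of_tendsto_of_le_of_le' tendsto_const_nhds htop hlow hhigh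
end

section
/- Let T be a rooted tree, α a finitely supported weight on T, and X a nonnegative random variable with E[X²] < ∞. Then the conditional square function of M = Θ_T(X, α) is again a weighted sum on T: almost surely s(M)² = Θ_T(X², β), where β is the new weight associated to (T, α, X). -/
open MeasureTheory ProbabilityTheory Filter
open scoped Classical

/-- The weighted sum `Θ_T(X, α) = ∑_{v ∈ T} α(v) ∏_{u ⪯ v} X(u)` on a rooted tree `T`
(a prefix-closed set of finite words over `ℕ`), where `{Xv v}` are the random variables
attached to the vertices (with `Xv ρ ≡ 1` at the root `ρ = []`); the product over the
prefixes `u ⪯ v` with `X(ρ) = 1` is `∏_{k < |v|} Xv (v.take (k+1))`. -/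
noncomputable def treeSum {Ω : Type*} (T : Set (List ℕ)) (Xv : List ℕ → Ω → ℝ)
    (α : List ℕ → ℝ) (ω : Ω) : ℝ :=
  ∑ᶠ v ∈ T, α v * ∏ k ∈ Finset.range v.length, Xv (v.take (k + 1)) ω

/-- The new weight `β` associated to `(T, α, X)`, where `μ = E[X]` and `σ2 = Var(X)`:
`β(ρ) = (∑_{x∈T} α(x) μ^{d(x,ρ)})² + σ2 ∑_{x∈C(ρ)} (∑_{y∈T(x)} α(y) μ^{d(x,y)})²` and,
for `v ≠ ρ`, `β(v) = σ2 ∑_{x∈C(v)} (∑_{y∈T(x)} α(y) μ^{d(x,y)})²` (and `β = 0` off `T`). -/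
noncomputable def newWeight (T : Set (List ℕ)) (α : List ℕ → ℝ) (μ σ2 : ℝ)
    (v : List ℕ) : ℝ :=
  if v ∈ T then
    (if v = [] then (∑ᶠ x ∈ T, α x * μ ^ x.length) ^ 2 else 0) +
      σ2 * ∑ᶠ x ∈ {w ∈ T | v <+: w ∧ w.length = v.length + 1},
        (∑ᶠ y ∈ {y ∈ T | x <+: y}, α y * μ ^ (y.length - x.length)) ^ 2
  else 0

/-- The filtration `F_m = σ({X(v) : v ∈ T, d(v,ρ) ≤ m})`. -/
noncomputable def treeFiltration {Ω : Type*} [MeasurableSpace Ω] (T : Set (List ℕ))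
    (Xv : List ℕ → Ω → ℝ) (m : ℕ) : MeasurableSpace Ω :=
  ⨆ v ∈ {v : List ℕ | v ∈ T ∧ v.length ≤ m}, MeasurableSpace.comap (Xv v) inferInstance

section Aux

variable {Ω : Type*} [MeasureSpace Ω] [IsProbabilityMeasure (ℙ : Measure Ω)]

/-- Product of independent integrable functions of distinct tree vertices is integrable,
with integral the product of integrals. -/
lemma prod_key (T : Set (List ℕ)) (Xv : List ℕ → Ω → ℝ) (hXvmeas : ∀ v, Measurable (Xv v))
    (hindep : iIndepFun
      (fun v : {v : List ℕ // v ∈ T ∧ v ≠ []} => Xv v.1) ℙ)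
    (φ : List ℕ → ℝ → ℝ) (hφ : ∀ v, Measurable (φ v)) (s : Finset (List ℕ)) :
    ∀ (_ : ∀ v ∈ s, v ∈ T ∧ v ≠ [])
      (_ : ∀ v ∈ s, Integrable (fun ω => φ v (Xv v ω)) ℙ),
    Integrable (fun ω => ∏ v ∈ s, φ v (Xv v ω)) ℙ ∧
      ∫ ω, ∏ v ∈ s, φ v (Xv v ω) ∂ℙ = ∏ v ∈ s, ∫ ω, φ v (Xv v ω) ∂ℙ := by
  classical
  induction s using Finset.induction_on with
  | empty => intro _ _; simp
  | @insert a s ha ih =>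
    intro hs hint
    have hsub : ∀ v ∈ s, v ∈ T ∧ v ≠ [] := fun v hv => hs v (Finset.mem_insert_of_mem hv)
    have hint' : ∀ v ∈ s, Integrable (fun ω => φ v (Xv v ω)) ℙ :=
      fun v hv => hint v (Finset.mem_insert_of_mem hv)
    obtain ⟨ih1, ih2⟩ := ih hsub hint'
    have hainta : Integrable (fun ω => φ a (Xv a ω)) ℙ := hint a (Finset.mem_insert_self a s)
    set p : List ℕ → Prop := fun v => v ∈ T ∧ v ≠ [] with hp
    have hcomp : iIndepFun
        (fun i : {v : List ℕ // v ∈ T ∧ v ≠ []} => fun ω => φ i.1 (Xv i.1 ω)) ℙ := by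
      have := hindep.comp (fun i : {v : List ℕ // v ∈ T ∧ v ≠ []} => φ i.1)
        (fun i => hφ i.1)
      exact this
    have hprod_eq : ∀ ω, (∏ v ∈ s, φ v (Xv v ω))
        = ∏ i ∈ s.subtype p, φ i.1 (Xv i.1 ω) := by
      intro ω
      have h := Finset.prod_subtype_eq_prod_filter (s := s) (fun v => φ v (Xv v ω)) (p := p)
      rw [Finset.filter_true_of_mem hsub] at h
      exact h.symm
    have hIndep2 : IndepFun (fun ω => ∏ v ∈ s, φ v (Xv v ω)) (fun ω => φ a (Xv a ω)) ℙ := by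
      have hnotmem : (⟨a, hs a (Finset.mem_insert_self a s)⟩ :
          {v : List ℕ // v ∈ T ∧ v ≠ []}) ∉ s.subtype p := by
        simp [Finset.mem_subtype, ha]
      have := hcomp.indepFun_finsetProd_of_notMem
        (fun i => (hφ i.1).comp (hXvmeas i.1)) hnotmem
      have heq : (∏ j ∈ s.subtype p,
          (fun i : {v : List ℕ // v ∈ T ∧ v ≠ []} => fun ω => φ i.1 (Xv i.1 ω)) j)
          = fun ω => ∏ v ∈ s, φ v (Xv v ω) := by
        funext ω
        rw [Finset.prod_apply]
        exact (hprod_eq ω).symm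
      rwa [heq] at this
    have hmul : Integrable (fun ω => (∏ v ∈ s, φ v (Xv v ω)) * φ a (Xv a ω)) ℙ := by
      have := hIndep2.integrable_mul ih1 hainta
      exact this
    constructor
    · have : (fun ω => ∏ v ∈ Insert.insert a s, φ v (Xv v ω))
          = fun ω => (∏ v ∈ s, φ v (Xv v ω)) * φ a (Xv a ω) := by
        funext ω; rw [Finset.prod_insert ha]; ring
      rw [this]; exact hmul
    · have hfe : (fun ω => ∏ v ∈ Insert.insert a s, φ v (Xv v ω))
          = fun ω => (∏ v ∈ s, φ v (Xv v ω)) * φ a (Xv a ω) := by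
        funext ω; rw [Finset.prod_insert ha]; ring
      rw [hfe, Finset.prod_insert ha]
      have h2 : ∫ ω, (∏ v ∈ s, φ v (Xv v ω)) * φ a (Xv a ω) ∂ℙ
          = (∫ ω, ∏ v ∈ s, φ v (Xv v ω) ∂ℙ) * ∫ ω, φ a (Xv a ω) ∂ℙ :=
        hIndep2.integral_fun_mul_eq_mul_integral ih1.aestronglyMeasurable hainta.aestronglyMeasurable
      rw [h2, ih2]; ring

end Aux

section Aux2

variable {Ω : Type*} [MeasureSpace Ω] [IsProbabilityMeasure (ℙ : Measure Ω)]

/-- Transfer integrability and integrals from `Xv v` to `X` via equality of laws. -/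
lemma transfer_key (X : Ω → ℝ) (hXmeas : Measurable X) (Y : Ω → ℝ) (hYmeas : Measurable Y)
    (hident : Measure.map Y ℙ = Measure.map X ℙ) (φ : ℝ → ℝ) (hφ : Measurable φ) :
    (Integrable (fun ω => φ (Y ω)) ℙ ↔ Integrable (fun ω => φ (X ω)) ℙ) ∧
      ∫ ω, φ (Y ω) ∂ℙ = ∫ ω, φ (X ω) ∂ℙ := by
  constructor
  · have h1 := integrable_map_measure (μ := ℙ) (f := Y) (g := φ)
      hφ.aestronglyMeasurable hYmeas.aemeasurable
    have h2 := integrable_map_measure (μ := ℙ) (f := X) (g := φ)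
      hφ.aestronglyMeasurable hXmeas.aemeasurable
    rw [hident] at h1
    exact ⟨fun h => h2.1 (h1.2 h), fun h => h1.1 (h2.2 h)⟩
  · have h1 := integral_map (μ := ℙ) (φ := Y) (f := φ) hYmeas.aemeasurable hφ.aestronglyMeasurable
    have h2 := integral_map (μ := ℙ) (φ := X) (f := φ) hXmeas.aemeasurable hφ.aestronglyMeasurable
    rw [hident] at h1
    rw [← h1, ← h2]

/-- The σ-algebra generated by the vertices of depth `> m`. -/
noncomputable def deepAlg (T : Set (List ℕ)) (Xv : List ℕ → Ω → ℝ) (m : ℕ) :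
    MeasurableSpace Ω :=
  ⨆ i ∈ {i : {v : List ℕ // v ∈ T ∧ v ≠ []} | m < i.1.length},
    MeasurableSpace.comap (Xv i.1) inferInstance

lemma treeFiltration_le (T : Set (List ℕ)) (Xv : List ℕ → Ω → ℝ)
    (hXvmeas : ∀ v, Measurable (Xv v)) (m : ℕ) :
    treeFiltration T Xv m ≤ (inferInstance : MeasurableSpace Ω) := by
  refine iSup₂_le fun v _ => (hXvmeas v).comap_le

lemma deepAlg_indep (T : Set (List ℕ)) (Xv : List ℕ → Ω → ℝ)
    (hXvmeas : ∀ v, Measurable (Xv v)) (hroot : ∀ ω, Xv [] ω = 1)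
    (hindep : iIndepFun
      (fun v : {v : List ℕ // v ∈ T ∧ v ≠ []} => Xv v.1) ℙ) (m : ℕ) :
    Indep (deepAlg T Xv m) (treeFiltration T Xv m) ℙ := by
  have h_le : ∀ i : {v : List ℕ // v ∈ T ∧ v ≠ []},
      MeasurableSpace.comap (Xv i.1) inferInstance ≤ (inferInstance : MeasurableSpace Ω) :=
    fun i => (hXvmeas i.1).comap_le
  have hii : iIndep (fun i : {v : List ℕ // v ∈ T ∧ v ≠ []} =>
      MeasurableSpace.comap (Xv i.1) inferInstance) ℙ := hindep
  have hdisj : Disjoint {i : {v : List ℕ // v ∈ T ∧ v ≠ []} | m < i.1.length}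
      {i : {v : List ℕ // v ∈ T ∧ v ≠ []} | i.1.length ≤ m} := by
    rw [Set.disjoint_left]
    intro i hi hi'
    simp only [Set.mem_setOf_eq] at hi hi'
    omega
  have h := indep_iSup_of_disjoint h_le hii hdisj
  refine indep_of_indep_of_le_right h ?_
  refine iSup₂_le fun v hv => ?_
  rcases eq_or_ne v ([] : List ℕ) with rfl | hne
  · have : Xv [] = fun _ => (1 : ℝ) := funext hroot
    rw [this, MeasurableSpace.comap_const]
    exact bot_le
  · exact le_iSup₂ (f := fun (i : {v : List ℕ // v ∈ T ∧ v ≠ []})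
      (_ : i ∈ {i : {v : List ℕ // v ∈ T ∧ v ≠ []} | i.1.length ≤ m}) =>
      MeasurableSpace.comap (Xv i.1) inferInstance) ⟨v, hv.1, hne⟩ hv.2

lemma measurable_Fm (T : Set (List ℕ)) (Xv : List ℕ → Ω → ℝ) (m : ℕ)
    (u : List ℕ) (hu : u ∈ T) (hlen : u.length ≤ m) (hroot : ∀ ω, Xv [] ω = 1) :
    Measurable[treeFiltration T Xv m] (Xv u) := by
  have hle : MeasurableSpace.comap (Xv u) inferInstance ≤ treeFiltration T Xv m :=
    le_iSup₂ (f := fun (v : List ℕ) (_ : v ∈ {v : List ℕ | v ∈ T ∧ v.length ≤ m}) =>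
      MeasurableSpace.comap (Xv v) inferInstance) u ⟨hu, hlen⟩
  exact (measurable_iff_comap_le.2 le_rfl).mono hle le_rfl

lemma measurable_deep (T : Set (List ℕ)) (Xv : List ℕ → Ω → ℝ) (m : ℕ)
    (u : List ℕ) (hu : u ∈ T) (hne : u ≠ []) (hlen : m < u.length) :
    Measurable[deepAlg T Xv m] (Xv u) := by
  have hle : MeasurableSpace.comap (Xv u) inferInstance ≤ deepAlg T Xv m :=
    le_iSup₂ (f := fun (i : {v : List ℕ // v ∈ T ∧ v ≠ []})
      (_ : i ∈ {i : {v : List ℕ // v ∈ T ∧ v ≠ []} | m < i.1.length}) =>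
      MeasurableSpace.comap (Xv i.1) inferInstance) ⟨u, hu, hne⟩ hlen
  exact (measurable_iff_comap_le.2 le_rfl).mono hle le_rfl

end Aux2

section Aux3

variable {Ω : Type*} [MeasureSpace Ω] [IsProbabilityMeasure (ℙ : Measure Ω)]

/-- partial path product up to depth `n`. -/
noncomputable def pT (Xv : List ℕ → Ω → ℝ) (v : List ℕ) (n : ℕ) (ω : Ω) : ℝ :=
  ∏ k ∈ Finset.range n, Xv (v.take (k + 1)) ω

lemma take_inj_on (v : List ℕ) (a b : ℕ) (hb : b ≤ v.length) :
    ∀ x ∈ Finset.Ico a b, ∀ y ∈ Finset.Ico a b,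
      v.take (x + 1) = v.take (y + 1) → x = y := by
  intro x hx y hy hxy
  have := congrArg List.length hxy
  simp only [List.length_take] at this
  simp only [Finset.mem_Ico] at hx hy
  omega

lemma segment_eq (v : List ℕ) (a b : ℕ) (hb : b ≤ v.length) (f : List ℕ → ℝ) :
    ∏ k ∈ Finset.Ico a b, f (v.take (k + 1))
      = ∏ u ∈ (Finset.Ico a b).image (fun k => v.take (k + 1)), f u :=
  (Finset.prod_image (take_inj_on v a b hb)).symm

lemma mem_image_Ico_take (v : List ℕ) (a b : ℕ) (hb : b ≤ v.length) (u : List ℕ)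
    (hu : u ∈ (Finset.Ico a b).image (fun k => v.take (k + 1))) :
    u <+: v ∧ a + 1 ≤ u.length ∧ u.length ≤ b ∧ u ≠ [] := by
  simp only [Finset.mem_image, Finset.mem_Ico] at hu
  obtain ⟨k, ⟨hak, hkb⟩, rfl⟩ := hu
  have hlen : (v.take (k + 1)).length = k + 1 := by
    simp only [List.length_take]; omega
  refine ⟨List.take_prefix _ _, by omega, by omega, ?_⟩
  intro h
  rw [h] at hlen
  simp at hlen

lemma integrable_prod_take (T : Set (List ℕ))
    (hTpref : ∀ u v : List ℕ, u <+: v → v ∈ T → u ∈ T)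
    (Xv : List ℕ → Ω → ℝ) (hXvmeas : ∀ v, Measurable (Xv v))
    (hindep : iIndepFun
      (fun v : {v : List ℕ // v ∈ T ∧ v ≠ []} => Xv v.1) ℙ)
    (X : Ω → ℝ) (hXmeas : Measurable X) (hXint : Integrable X ℙ)
    (hident : ∀ v ∈ T, v ≠ [] → Measure.map (Xv v) ℙ = Measure.map X ℙ)
    (v : List ℕ) (hv : v ∈ T) (a b : ℕ) (hb : b ≤ v.length) :
    Integrable (fun ω => ∏ k ∈ Finset.Ico a b, Xv (v.take (k + 1)) ω) ℙ ∧
      ∫ ω, ∏ k ∈ Finset.Ico a b, Xv (v.take (k + 1)) ω ∂ℙ = (∫ ω, X ω ∂ℙ) ^ (b - a) := by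
  have hmem : ∀ u ∈ (Finset.Ico a b).image (fun k => v.take (k + 1)), u ∈ T ∧ u ≠ [] := by
    intro u hu
    obtain ⟨hpre, _, _, hne⟩ := mem_image_Ico_take v a b hb u hu
    exact ⟨hTpref u v hpre hv, hne⟩
  have hXuint : ∀ u ∈ (Finset.Ico a b).image (fun k => v.take (k + 1)),
      Integrable (fun ω => Xv u ω) ℙ := by
    intro u hu
    obtain ⟨huT, hune⟩ := hmem u hu
    exact ((transfer_key X hXmeas (Xv u) (hXvmeas u) (hident u huT hune)
      (fun t => t) measurable_id).1).2 hXint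
  have hkey := prod_key T Xv hXvmeas hindep (fun _ t => t) (fun _ => measurable_id)
    ((Finset.Ico a b).image (fun k => v.take (k + 1))) hmem hXuint
  constructor
  · have := hkey.1
    rwa [show (fun ω => ∏ u ∈ (Finset.Ico a b).image (fun k => v.take (k + 1)), Xv u ω)
      = fun ω => ∏ k ∈ Finset.Ico a b, Xv (v.take (k + 1)) ω from
        funext fun ω => (segment_eq v a b hb (fun u => Xv u ω)).symm] at this
  · have h1 : ∫ ω, ∏ k ∈ Finset.Ico a b, Xv (v.take (k + 1)) ω ∂ℙ
        = ∏ u ∈ (Finset.Ico a b).image (fun k => v.take (k + 1)), ∫ ω, Xv u ω ∂ℙ := by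
      rw [show (fun ω => ∏ k ∈ Finset.Ico a b, Xv (v.take (k + 1)) ω)
        = fun ω => ∏ u ∈ (Finset.Ico a b).image (fun k => v.take (k + 1)), Xv u ω from
          funext fun ω => segment_eq v a b hb (fun u => Xv u ω)]
      exact hkey.2
    rw [h1]
    have h2 : ∀ u ∈ (Finset.Ico a b).image (fun k => v.take (k + 1)),
        ∫ ω, Xv u ω ∂ℙ = ∫ ω, X ω ∂ℙ := by
      intro u hu
      obtain ⟨huT, hune⟩ := hmem u hu
      exact (transfer_key X hXmeas (Xv u) (hXvmeas u) (hident u huT hune)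
        (fun t => t) measurable_id).2
    rw [Finset.prod_congr rfl h2, Finset.prod_const]
    congr 1
    rw [Finset.card_image_of_injOn, Nat.card_Ico]
    intro x hx y hy
    exact take_inj_on v a b hb x hx y hy


lemma deepAlg_le (T : Set (List ℕ)) (Xv : List ℕ → Ω → ℝ)
    (hXvmeas : ∀ v, Measurable (Xv v)) (m : ℕ) :
    deepAlg T Xv m ≤ (inferInstance : MeasurableSpace Ω) :=
  iSup₂_le fun i _ => (hXvmeas i.1).comap_le

lemma ae_sum_congr {κ : Type*} (s : Finset κ) (f g : κ → Ω → ℝ)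
    (h : ∀ i ∈ s, f i =ᵐ[ℙ] g i) :
    (fun ω => ∑ i ∈ s, f i ω) =ᵐ[ℙ] fun ω => ∑ i ∈ s, g i ω := by
  have h' : ∀ᵐ ω ∂ℙ, ∀ i ∈ s, f i ω = g i ω := (eventually_all_finset s).2 h
  filter_upwards [h'] with ω hω
  exact Finset.sum_congr rfl hω

lemma pT_sm (T : Set (List ℕ)) (hTpref : ∀ u v : List ℕ, u <+: v → v ∈ T → u ∈ T)
    (Xv : List ℕ → Ω → ℝ) (hroot : ∀ ω, Xv [] ω = 1) (m n : ℕ)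
    (v : List ℕ) (hv : v ∈ T) (hn : n ≤ m) :
    StronglyMeasurable[treeFiltration T Xv m] (pT Xv v n) := by
  refine Measurable.stronglyMeasurable ?_
  refine Finset.measurable_prod _ fun k hk => ?_
  refine measurable_Fm T Xv m _ (hTpref _ v (List.take_prefix _ _) hv) ?_ hroot
  simp only [Finset.mem_range] at hk
  simp only [List.length_take]
  omega

lemma condexp_pT (T : Set (List ℕ)) (hTpref : ∀ u v : List ℕ, u <+: v → v ∈ T → u ∈ T)
    (Xv : List ℕ → Ω → ℝ) (hXvmeas : ∀ v, Measurable (Xv v)) (hroot : ∀ ω, Xv [] ω = 1)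
    (hindep : iIndepFun
      (fun v : {v : List ℕ // v ∈ T ∧ v ≠ []} => Xv v.1) ℙ)
    (X : Ω → ℝ) (hXmeas : Measurable X) (hXint : Integrable X ℙ)
    (hident : ∀ v ∈ T, v ≠ [] → Measure.map (Xv v) ℙ = Measure.map X ℙ)
    (m : ℕ) (v : List ℕ) (hv : v ∈ T) :
    ℙ[pT Xv v v.length | treeFiltration T Xv m] =ᵐ[ℙ]
      fun ω => (∫ ω', X ω' ∂ℙ) ^ (v.length - m) * pT Xv v (min v.length m) ω := by
  have hle2 := treeFiltration_le T Xv hXvmeas m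
  have hPint : Integrable (pT Xv v v.length) ℙ := by
    have := (integrable_prod_take T hTpref Xv hXvmeas hindep X hXmeas hXint hident
      v hv 0 v.length le_rfl).1
    have he : pT Xv v v.length = fun ω => ∏ k ∈ Finset.Ico 0 v.length, Xv (v.take (k + 1)) ω := by
      funext ω; rw [pT, Finset.range_eq_Ico]
    rw [he]; exact this
  rcases le_or_gt v.length m with h | h
  · rw [condExp_of_stronglyMeasurable hle2 (pT_sm T hTpref Xv hroot m v.length v hv h) hPint]
    refine Filter.EventuallyEq.of_eq ?_
    funext ω
    rw [Nat.min_eq_left h, Nat.sub_eq_zero_of_le h, pow_zero, one_mul]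
  · set n := v.length with hn
    set R := fun ω => ∏ k ∈ Finset.Ico m n, Xv (v.take (k + 1)) ω with hR
    have hsplit : pT Xv v n = pT Xv v m * R := by
      funext ω
      simp only [pT, Pi.mul_apply, hR, Finset.range_eq_Ico]
      exact (Finset.prod_Ico_consecutive _ (Nat.zero_le m) h.le).symm
    obtain ⟨hRint, hRval⟩ := integrable_prod_take T hTpref Xv hXvmeas hindep X hXmeas hXint
      hident v hv m n hn.le
    have hPQR : Integrable (pT Xv v m * R) ℙ := by rw [← hsplit]; exact hPint
    have hQsm : StronglyMeasurable[treeFiltration T Xv m] (pT Xv v m) :=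
      pT_sm T hTpref Xv hroot m m v hv le_rfl
    have h1 := condExp_mul_of_stronglyMeasurable_left (μ := ℙ) hQsm hPQR hRint
    have hRsm : StronglyMeasurable[deepAlg T Xv m] R := by
      refine Measurable.stronglyMeasurable ?_
      refine Finset.measurable_prod _ fun k hk => ?_
      simp only [Finset.mem_Ico] at hk
      have hlen : (v.take (k + 1)).length = k + 1 := by
        simp only [List.length_take]; omega
      refine measurable_deep T Xv m _ (hTpref _ v (List.take_prefix _ _) hv) ?_ ?_
      · intro hnil; rw [hnil] at hlen; simp at hlen
      · omega
    have h2 : ℙ[R | treeFiltration T Xv m] =ᵐ[ℙ] fun _ => ∫ ω, R ω ∂ℙ :=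
      condExp_indep_eq (μ := ℙ) (deepAlg_le T Xv hXvmeas m) hle2 hRsm
        (deepAlg_indep T Xv hXvmeas hroot hindep m)
    have h3 : ℙ[pT Xv v n | treeFiltration T Xv m]
        =ᵐ[ℙ] pT Xv v m * fun _ => ∫ ω, R ω ∂ℙ := by
      rw [hsplit]
      exact h1.trans (Filter.EventuallyEq.mul (Filter.EventuallyEq.refl _ _) h2)
    refine h3.trans (Filter.EventuallyEq.of_eq ?_)
    funext ω
    simp only [Pi.mul_apply, hR, hRval, Nat.min_eq_right h.le]
    ring


lemma treeSum_eq (T : Set (List ℕ)) (α : List ℕ → ℝ) (hαT : ∀ v ∉ T, α v = 0)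
    (hαfin : {v | α v ≠ 0}.Finite) (Xv : List ℕ → Ω → ℝ) (ω : Ω) :
    treeSum T Xv α ω = ∑ v ∈ hαfin.toFinset, α v * pT Xv v v.length ω := by
  rw [treeSum]
  refine finsum_mem_eq_sum_of_inter_support_eq _ ?_
  ext x
  simp only [Set.mem_inter_iff, Function.mem_support, Set.Finite.coe_toFinset,
    Set.mem_setOf_eq, ne_eq]
  constructor
  · rintro ⟨hxT, hx⟩
    refine ⟨fun h0 => hx ?_, hx⟩
    rw [h0, zero_mul]
  · rintro ⟨hxα, hx⟩
    refine ⟨by_contra fun hT => hxα (hαT x hT), hx⟩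

lemma condexp_treeSum (T : Set (List ℕ)) (hTpref : ∀ u v : List ℕ, u <+: v → v ∈ T → u ∈ T)
    (α : List ℕ → ℝ) (hαT : ∀ v ∉ T, α v = 0) (hαfin : {v | α v ≠ 0}.Finite)
    (Xv : List ℕ → Ω → ℝ) (hXvmeas : ∀ v, Measurable (Xv v)) (hroot : ∀ ω, Xv [] ω = 1)
    (hindep : iIndepFun
      (fun v : {v : List ℕ // v ∈ T ∧ v ≠ []} => Xv v.1) ℙ)
    (X : Ω → ℝ) (hXmeas : Measurable X) (hXint : Integrable X ℙ)
    (hident : ∀ v ∈ T, v ≠ [] → Measure.map (Xv v) ℙ = Measure.map X ℙ)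
    (m : ℕ) :
    ℙ[treeSum T Xv α | treeFiltration T Xv m] =ᵐ[ℙ]
      fun ω => ∑ v ∈ hαfin.toFinset, α v *
        ((∫ ω', X ω' ∂ℙ) ^ (v.length - m) * pT Xv v (min v.length m) ω) := by
  classical
  have hAT : ∀ v ∈ hαfin.toFinset, v ∈ T := by
    intro v hv
    rw [Set.Finite.mem_toFinset] at hv
    exact by_contra fun hT => hv (hαT v hT)
  have hPint : ∀ v ∈ hαfin.toFinset, Integrable (pT Xv v v.length) ℙ := by
    intro v hv
    have := (integrable_prod_take T hTpref Xv hXvmeas hindep X hXmeas hXint hident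
      v (hAT v hv) 0 v.length le_rfl).1
    have he : pT Xv v v.length = fun ω => ∏ k ∈ Finset.Ico 0 v.length, Xv (v.take (k + 1)) ω := by
      funext ω; rw [pT, Finset.range_eq_Ico]
    rw [he]; exact this
  have hM : treeSum T Xv α = ∑ v ∈ hαfin.toFinset, (fun ω => α v • pT Xv v v.length ω) := by
    funext ω
    rw [treeSum_eq T α hαT hαfin Xv ω, Finset.sum_apply]
    exact Finset.sum_congr rfl fun v _ => (smul_eq_mul _ _).symm
  have h1 : ℙ[treeSum T Xv α | treeFiltration T Xv m] =ᵐ[ℙ]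
      ∑ v ∈ hαfin.toFinset, ℙ[fun ω => α v • pT Xv v v.length ω | treeFiltration T Xv m] := by
    rw [hM]
    exact condExp_finset_sum (fun v hv => (hPint v hv).smul (α v)) _
  have h2 : ∀ v ∈ hαfin.toFinset,
      ℙ[fun ω => α v • pT Xv v v.length ω | treeFiltration T Xv m] =ᵐ[ℙ]
        fun ω => α v * ((∫ ω', X ω' ∂ℙ) ^ (v.length - m) * pT Xv v (min v.length m) ω) := by
    intro v hv
    have hsmul : ℙ[fun ω => α v • pT Xv v v.length ω | treeFiltration T Xv m] =ᵐ[ℙ]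
        α v • ℙ[pT Xv v v.length | treeFiltration T Xv m] :=
      condExp_smul (α v) (pT Xv v v.length) _
    refine hsmul.trans ?_
    have := condexp_pT T hTpref Xv hXvmeas hroot hindep X hXmeas hXint hident m v (hAT v hv)
    exact this.mono fun ω hω => by
      simp only [Pi.smul_apply, hω, smul_eq_mul]
  have h3 : (∑ v ∈ hαfin.toFinset,
        ℙ[fun ω => α v • pT Xv v v.length ω | treeFiltration T Xv m]) =ᵐ[ℙ]
      fun ω => ∑ v ∈ hαfin.toFinset, α v *
        ((∫ ω', X ω' ∂ℙ) ^ (v.length - m) * pT Xv v (min v.length m) ω) := by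
    have := ae_sum_congr hαfin.toFinset _ _ h2
    refine Filter.EventuallyEq.trans (Filter.EventuallyEq.of_eq ?_) this
    funext ω
    rw [Finset.sum_apply]
  exact h1.trans h3


noncomputable def cw (A : Finset (List ℕ)) (α : List ℕ → ℝ) (μ0 : ℝ) (x : List ℕ) : ℝ :=
  ∑ v ∈ A.filter (fun v => x <+: v), α v * μ0 ^ (v.length - x.length)

noncomputable def prefFin (A : Finset (List ℕ)) : Finset (List ℕ) :=
  A.biUnion fun v => (Finset.range (v.length + 1)).image (fun k => v.take k)

lemma mem_prefFin {A : Finset (List ℕ)} {x : List ℕ} :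
    x ∈ prefFin A ↔ ∃ v ∈ A, x <+: v := by
  simp only [prefFin, Finset.mem_biUnion, Finset.mem_image, Finset.mem_range]
  constructor
  · rintro ⟨v, hv, k, _, rfl⟩
    exact ⟨v, hv, List.take_prefix _ _⟩
  · rintro ⟨v, hv, hpre⟩
    exact ⟨v, hv, x.length, by
      have := hpre.length_le
      omega, (List.prefix_iff_eq_take.1 hpre).symm⟩

lemma pT_take_eq (Xv : List ℕ → Ω → ℝ) (v : List ℕ) (m n : ℕ) (hm : m ≤ n) (ω : Ω) :
    pT Xv (v.take n) m ω = pT Xv v m ω := by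
  rw [pT, pT]
  refine Finset.prod_congr rfl fun k hk => ?_
  simp only [Finset.mem_range] at hk
  rw [List.take_take, min_eq_left (by omega : k + 1 ≤ n)]

lemma diff_eq (A : Finset (List ℕ)) (α : List ℕ → ℝ) (μ0 : ℝ)
    (Xv : List ℕ → Ω → ℝ) (m : ℕ) (ω : Ω) :
    (∑ v ∈ A, α v * (μ0 ^ (v.length - (m + 1)) * pT Xv v (min v.length (m + 1)) ω))
      - (∑ v ∈ A, α v * (μ0 ^ (v.length - m) * pT Xv v (min v.length m) ω))
    = ∑ x ∈ (prefFin A).filter (fun x => x.length = m + 1),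
        cw A α μ0 x * pT Xv x m ω * (Xv x ω - μ0) := by
  classical
  rw [← Finset.sum_sub_distrib]
  set d : List ℕ → ℝ := fun v =>
    α v * (μ0 ^ (v.length - (m + 1)) * pT Xv v (min v.length (m + 1)) ω)
      - α v * (μ0 ^ (v.length - m) * pT Xv v (min v.length m) ω) with hd
  have hzero : ∀ v ∈ A, v ∉ A.filter (fun v => m + 1 ≤ v.length) → d v = 0 := by
    intro v hv hvn
    have hlen : v.length ≤ m := by
      by_contra hc
      exact hvn (Finset.mem_filter.2 ⟨hv, by omega⟩)
    simp only [hd, min_eq_left (by omega : v.length ≤ m + 1),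
      min_eq_left (by omega : v.length ≤ m),
      Nat.sub_eq_zero_of_le (by omega : v.length ≤ m + 1),
      Nat.sub_eq_zero_of_le hlen, sub_self]
  rw [← Finset.sum_subset (Finset.filter_subset _ A) hzero]
  have hterm : ∀ v ∈ A.filter (fun v => m + 1 ≤ v.length),
      d v = (α v * μ0 ^ (v.length - (m + 1))) * (pT Xv (v.take (m + 1)) m ω
        * (Xv (v.take (m + 1)) ω - μ0)) := by
    intro v hv
    obtain ⟨-, hlen⟩ := Finset.mem_filter.1 hv
    have h1 : min v.length (m + 1) = m + 1 := min_eq_right hlen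
    have h2 : min v.length m = m := min_eq_right (by omega)
    have h3 : v.length - m = (v.length - (m + 1)) + 1 := by omega
    have h4 : pT Xv v (m + 1) ω = pT Xv v m ω * Xv (v.take (m + 1)) ω := by
      rw [pT, pT, Finset.prod_range_succ]
    have h5 : pT Xv (v.take (m + 1)) m ω = pT Xv v m ω :=
      pT_take_eq Xv v m (m + 1) (by omega) ω
    simp only [hd, h1, h2, h3, h4, h5, pow_succ]
    ring
  rw [Finset.sum_congr rfl hterm]
  rw [← Finset.sum_fiberwise_of_maps_to (g := fun v => v.take (m + 1))
    (t := (prefFin A).filter (fun x => x.length = m + 1)) ?_]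
  · refine Finset.sum_congr rfl fun x hx => ?_
    obtain ⟨hxP, hxlen⟩ := Finset.mem_filter.1 hx
    have hfib : (A.filter (fun v => m + 1 ≤ v.length)).filter
          (fun v => v.take (m + 1) = x)
        = A.filter (fun v => x <+: v) := by
      rw [Finset.filter_filter]
      refine Finset.filter_congr fun v _ => ?_
      constructor
      · rintro ⟨hlen, rfl⟩
        exact List.take_prefix _ _
      · intro hpre
        have hlen := hpre.length_le
        have : v.take (m + 1) = x := by
          have := List.prefix_iff_eq_take.1 hpre
          rw [this, hxlen]
        exact ⟨by omega, this⟩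
    rw [hfib]
    have : ∀ v ∈ A.filter (fun v => x <+: v),
        (α v * μ0 ^ (v.length - (m + 1))) * (pT Xv (v.take (m + 1)) m ω
          * (Xv (v.take (m + 1)) ω - μ0))
        = (α v * μ0 ^ (v.length - x.length)) * (pT Xv x m ω * (Xv x ω - μ0)) := by
      intro v hv
      obtain ⟨-, hpre⟩ := Finset.mem_filter.1 hv
      have htake : v.take (m + 1) = x := by
        have := List.prefix_iff_eq_take.1 hpre
        rw [this, hxlen]
      rw [htake, hxlen]
    rw [Finset.sum_congr rfl this, ← Finset.sum_mul, cw]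
    ring
  · intro v hv
    obtain ⟨hvA, hlen⟩ := Finset.mem_filter.1 hv
    refine Finset.mem_filter.2 ⟨mem_prefFin.2 ⟨v, hvA, List.take_prefix _ _⟩, ?_⟩
    simp only [List.length_take]
    omega


lemma condexp_sq (T : Set (List ℕ)) (hTpref : ∀ u v : List ℕ, u <+: v → v ∈ T → u ∈ T)
    (Xv : List ℕ → Ω → ℝ) (hXvmeas : ∀ v, Measurable (Xv v)) (hroot : ∀ ω, Xv [] ω = 1)
    (hindep : iIndepFun
      (fun v : {v : List ℕ // v ∈ T ∧ v ≠ []} => Xv v.1) ℙ)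
    (X : Ω → ℝ) (hXmeas : Measurable X) (hXsq : Integrable (fun ω => X ω ^ 2) ℙ)
    (hident : ∀ v ∈ T, v ≠ [] → Measure.map (Xv v) ℙ = Measure.map X ℙ)
    (m : ℕ) (E : Finset (List ℕ)) (hE : ∀ x ∈ E, x ∈ T ∧ x.length = m + 1)
    (c : List ℕ → ℝ) :
    ℙ[(fun ω => (∑ x ∈ E, c x * pT Xv x m ω * (Xv x ω - ∫ ω', X ω' ∂ℙ)) ^ 2)
        | treeFiltration T Xv m] =ᵐ[ℙ]
      fun ω => variance X ℙ * ∑ x ∈ E, c x ^ 2 * pT Xv x m ω ^ 2 := by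
  classical
  set μ0 := ∫ ω', X ω' ∂ℙ with hμ0
  set σ2 := variance X ℙ with hσ2
  have hX2 : MemLp X 2 ℙ := (memLp_two_iff_integrable_sq hXmeas.aestronglyMeasurable).2 hXsq
  have hXint : Integrable X ℙ := hX2.integrable one_le_two
  have hXX : Integrable (fun ω => X ω * X ω) ℙ := by
    have : (fun ω => X ω * X ω) = fun ω => X ω ^ 2 := by funext ω; ring
    rw [this]; exact hXsq
  have hXsub : Integrable (fun ω => X ω - μ0) ℙ := hXint.sub (integrable_const μ0)
  have hXsubsq : Integrable (fun ω => (X ω - μ0) * (X ω - μ0)) ℙ := by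
    have : (fun ω => (X ω - μ0) * (X ω - μ0))
        = fun ω => (X ω ^ 2 - (2 * μ0) * X ω) + μ0 ^ 2 := by funext ω; ring
    rw [this]
    exact (hXsq.sub (hXint.const_mul _)).add (integrable_const _)
  have hvar : ∫ ω, (X ω - μ0) * (X ω - μ0) ∂ℙ = σ2 := by
    have h1 : (fun ω => (X ω - μ0) * (X ω - μ0))
        = fun ω => (X ω ^ 2 - (2 * μ0) * X ω) + μ0 ^ 2 := by funext ω; ring
    have i1 : Integrable (fun ω => X ω ^ 2 - (2 * μ0) * X ω) ℙ :=
      hXsq.sub (hXint.const_mul _)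
    have i2 : Integrable (fun ω => (2 * μ0) * X ω) ℙ := hXint.const_mul _
    rw [h1, integral_add i1 (integrable_const _),
      integral_sub hXsq i2, integral_const_mul, integral_const,
      probReal_univ]
    rw [hσ2, variance_eq_sub hX2]
    have h2 : ℙ[X ^ 2] = ∫ ω, X ω ^ 2 ∂ℙ := by rfl
    have h3 : ℙ[X] = μ0 := by rfl
    rw [h2, h3]
    simp
    ring
  -- basic transfers
  have hTint : ∀ u, u ∈ T → u ≠ [] → ∀ φ : ℝ → ℝ, Measurable φ →
      Integrable (fun ω => φ (X ω)) ℙ → Integrable (fun ω => φ (Xv u ω)) ℙ :=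
    fun u hu hne φ hφ h =>
      ((transfer_key X hXmeas (Xv u) (hXvmeas u) (hident u hu hne) φ hφ).1).2 h
  have hTval : ∀ u, u ∈ T → u ≠ [] → ∀ φ : ℝ → ℝ, Measurable φ →
      ∫ ω, φ (Xv u ω) ∂ℙ = ∫ ω, φ (X ω) ∂ℙ :=
    fun u hu hne φ hφ =>
      (transfer_key X hXmeas (Xv u) (hXvmeas u) (hident u hu hne) φ hφ).2
  have hle2 := treeFiltration_le T Xv hXvmeas m
  -- the main per-pair computation
  have main : ∀ p ∈ E ×ˢ E,
      Integrable (fun ω => (c p.1 * c p.2) • ((pT Xv p.1 m ω * pT Xv p.2 m ω)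
          * ((Xv p.1 ω - μ0) * (Xv p.2 ω - μ0)))) ℙ ∧
      (ℙ[(fun ω => (c p.1 * c p.2) • ((pT Xv p.1 m ω * pT Xv p.2 m ω)
          * ((Xv p.1 ω - μ0) * (Xv p.2 ω - μ0)))) | treeFiltration T Xv m] =ᵐ[ℙ]
      (fun ω => (c p.1 * c p.2) • ((pT Xv p.1 m ω * pT Xv p.2 m ω)
          * (if p.1 = p.2 then σ2 else 0)))) := by
    rintro ⟨x, y⟩ hp
    obtain ⟨hxE, hyE⟩ := Finset.mem_product.1 hp
    obtain ⟨hxT, hxlen⟩ := hE x hxE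
    obtain ⟨hyT, hylen⟩ := hE y hyE
    have hxne : x ≠ [] := by intro h; rw [h] at hxlen; simp at hxlen
    have hyne : y ≠ [] := by intro h; rw [h] at hylen; simp at hylen
    set Px := (Finset.Ico 0 m).image (fun k => x.take (k + 1)) with hPx
    set Py := (Finset.Ico 0 m).image (fun k => y.take (k + 1)) with hPy
    have hbx : m ≤ x.length := by omega
    have hby : m ≤ y.length := by omega
    have hPxfact : ∀ u ∈ Px, u <+: x ∧ 1 ≤ u.length ∧ u.length ≤ m ∧ u ≠ [] :=
      fun u hu => mem_image_Ico_take x 0 m hbx u hu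
    have hPyfact : ∀ u ∈ Py, u <+: y ∧ 1 ≤ u.length ∧ u.length ≤ m ∧ u ≠ [] :=
      fun u hu => mem_image_Ico_take y 0 m hby u hu
    set S := (Px ∪ Py) ∪ {x, y} with hS
    have hSmem : ∀ u ∈ S, u ∈ T ∧ u ≠ [] := by
      intro u hu
      rcases Finset.mem_union.1 hu with h | h
      · rcases Finset.mem_union.1 h with h' | h'
        · exact ⟨hTpref u x (hPxfact u h').1 hxT, (hPxfact u h').2.2.2⟩
        · exact ⟨hTpref u y (hPyfact u h').1 hyT, (hPyfact u h').2.2.2⟩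
      · rcases Finset.mem_insert.1 h with rfl | h'
        · exact ⟨hxT, hxne⟩
        · rw [Finset.mem_singleton.1 h']; exact ⟨hyT, hyne⟩
    have hxnotP : x ∉ Px ∪ Py := by
      intro h
      rcases Finset.mem_union.1 h with h' | h'
      · have := (hPxfact x h').2.2.1; omega
      · have := (hPyfact x h').2.2.1; omega
    have hynotP : y ∉ Px ∪ Py := by
      intro h
      rcases Finset.mem_union.1 h with h' | h'
      · have := (hPxfact y h').2.2.1; omega
      · have := (hPyfact y h').2.2.1; omega
    set φ : List ℕ → ℝ → ℝ := fun u t =>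
      (if u ∈ Px then t else 1) * ((if u ∈ Py then t else 1)
        * ((if u = x then t - μ0 else 1) * (if u = y then t - μ0 else 1))) with hφ
    have hφmeas : ∀ u, Measurable (φ u) := by
      intro u
      have m1 : ∀ (b : Prop) (_ : Decidable b), Measurable (fun t : ℝ => if b then t else 1) := by
        intro b hb
        split_ifs
        exacts [measurable_id, measurable_const]
      have m2 : ∀ (b : Prop) (_ : Decidable b),
          Measurable (fun t : ℝ => if b then t - μ0 else 1) := by
        intro b hb
        split_ifs
        exacts [measurable_id.sub measurable_const, measurable_const]
      exact (m1 _ _).mul ((m1 _ _).mul ((m2 _ _).mul (m2 _ _)))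
    have hφint : ∀ u ∈ S, Integrable (fun ω => φ u (Xv u ω)) ℙ := by
      intro u hu
      obtain ⟨huT, hune⟩ := hSmem u hu
      rcases Finset.mem_union.1 hu with h | h
      · have hux : u ≠ x := by
          intro heq
          exact hxnotP (heq ▸ h)
        have huy : u ≠ y := by
          intro heq
          exact hynotP (heq ▸ h)
        simp only [hφ, if_neg hux, if_neg huy, mul_one]
        split_ifs with h1 h2 h3
        · exact hTint u huT hune (fun t => t * t) (measurable_id.mul measurable_id) hXX
        · simpa using hTint u huT hune (fun t => t) measurable_id hXint
        · simpa using hTint u huT hune (fun t => t) measurable_id hXint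
        · simpa using integrable_const (1 : ℝ)
      · have hu1 : u ∉ Px := by
          intro h'
          rcases Finset.mem_insert.1 h with heq | h''
          · exact hxnotP (Finset.mem_union_left _ (heq ▸ h'))
          · have heq := Finset.mem_singleton.1 h''
            exact hynotP (Finset.mem_union_left _ (heq ▸ h'))
        have hu2 : u ∉ Py := by
          intro h'
          rcases Finset.mem_insert.1 h with heq | h''
          · exact hxnotP (Finset.mem_union_right _ (heq ▸ h'))
          · have heq := Finset.mem_singleton.1 h''
            exact hynotP (Finset.mem_union_right _ (heq ▸ h'))
        simp only [hφ, if_neg hu1, if_neg hu2, one_mul]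
        split_ifs with h1 h2 h3
        · exact hTint u huT hune (fun t => (t - μ0) * (t - μ0))
            ((measurable_id.sub measurable_const).mul
              (measurable_id.sub measurable_const)) hXsubsq
        · simpa using hTint u huT hune (fun t => t - μ0)
            (measurable_id.sub measurable_const) hXsub
        · simpa using hTint u huT hune (fun t => t - μ0)
            (measurable_id.sub measurable_const) hXsub
        · simpa using integrable_const (1 : ℝ)
    have hPxS : Px ⊆ S := fun u hu =>
      Finset.mem_union_left _ (Finset.mem_union_left _ hu)
    have hPyS : Py ⊆ S := fun u hu =>
      Finset.mem_union_left _ (Finset.mem_union_right _ hu)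
    have hxS : x ∈ S := Finset.mem_union_right _ (Finset.mem_insert_self _ _)
    have hyS : y ∈ S :=
      Finset.mem_union_right _ (Finset.mem_insert_of_mem (Finset.mem_singleton_self _))
    have hprodS : ∀ ω, (∏ u ∈ S, φ u (Xv u ω))
        = (pT Xv x m ω * pT Xv y m ω) * ((Xv x ω - μ0) * (Xv y ω - μ0)) := by
      intro ω
      simp only [hφ]
      rw [Finset.prod_mul_distrib, Finset.prod_mul_distrib, Finset.prod_mul_distrib]
      have f1 : (∏ u ∈ S, if u ∈ Px then Xv u ω else 1) = pT Xv x m ω := by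
        rw [Finset.prod_ite_mem S Px (fun u => Xv u ω),
          Finset.inter_eq_right.2 hPxS]
        rw [pT, Finset.range_eq_Ico, segment_eq x 0 m hbx (fun u => Xv u ω)]
      have f2 : (∏ u ∈ S, if u ∈ Py then Xv u ω else 1) = pT Xv y m ω := by
        rw [Finset.prod_ite_mem S Py (fun u => Xv u ω),
          Finset.inter_eq_right.2 hPyS]
        rw [pT, Finset.range_eq_Ico, segment_eq y 0 m hby (fun u => Xv u ω)]
      have f3 : (∏ u ∈ S, if u = x then Xv u ω - μ0 else 1) = Xv x ω - μ0 := by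
        rw [Finset.prod_ite_eq' S x (fun u => Xv u ω - μ0), if_pos hxS]
      have f4 : (∏ u ∈ S, if u = y then Xv u ω - μ0 else 1) = Xv y ω - μ0 := by
        rw [Finset.prod_ite_eq' S y (fun u => Xv u ω - μ0), if_pos hyS]
      rw [f1, f2, f3, f4]
      ring
    have hWg_int : Integrable (fun ω => (pT Xv x m ω * pT Xv y m ω)
        * ((Xv x ω - μ0) * (Xv y ω - μ0))) ℙ := by
      have := (prod_key T Xv hXvmeas hindep φ hφmeas S hSmem hφint).1
      rwa [show (fun ω => ∏ u ∈ S, φ u (Xv u ω)) = fun ω => (pT Xv x m ω * pT Xv y m ω)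
        * ((Xv x ω - μ0) * (Xv y ω - μ0)) from funext hprodS] at this
    have hg_int : Integrable (fun ω => (Xv x ω - μ0) * (Xv y ω - μ0)) ℙ := by
      rcases eq_or_ne x y with rfl | hxy
      · exact hTint x hxT hxne (fun t => (t - μ0) * (t - μ0))
          ((measurable_id.sub measurable_const).mul
            (measurable_id.sub measurable_const)) hXsubsq
      · have hIF : IndepFun (Xv x) (Xv y) ℙ := by
          refine hindep.indepFun (i := ⟨x, hxT, hxne⟩) (j := ⟨y, hyT, hyne⟩) ?_
          intro h
          exact hxy (congrArg Subtype.val h)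
        have hIF2 : IndepFun (fun ω => Xv x ω - μ0) (fun ω => Xv y ω - μ0) ℙ :=
          hIF.comp (measurable_id.sub measurable_const)
            (measurable_id.sub measurable_const)
        exact hIF2.integrable_mul
          (hTint x hxT hxne (fun t => t - μ0) (measurable_id.sub measurable_const) hXsub)
          (hTint y hyT hyne (fun t => t - μ0) (measurable_id.sub measurable_const) hXsub)
    have hgval : ∫ ω, (Xv x ω - μ0) * (Xv y ω - μ0) ∂ℙ = if x = y then σ2 else 0 := by
      rcases eq_or_ne x y with rfl | hxy
      · rw [if_pos rfl]
        rw [hTval x hxT hxne (fun t => (t - μ0) * (t - μ0))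
          ((measurable_id.sub measurable_const).mul (measurable_id.sub measurable_const))]
        exact hvar
      · rw [if_neg hxy]
        have hIF : IndepFun (Xv x) (Xv y) ℙ := by
          refine hindep.indepFun (i := ⟨x, hxT, hxne⟩) (j := ⟨y, hyT, hyne⟩) ?_
          intro h
          exact hxy (congrArg Subtype.val h)
        have hIF2 : IndepFun (fun ω => Xv x ω - μ0) (fun ω => Xv y ω - μ0) ℙ :=
          hIF.comp (measurable_id.sub measurable_const)
            (measurable_id.sub measurable_const)
        have h1 : ∫ ω, (Xv x ω - μ0) * (Xv y ω - μ0) ∂ℙ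
            = (∫ ω, (Xv x ω - μ0) ∂ℙ) * ∫ ω, (Xv y ω - μ0) ∂ℙ :=
          hIF2.integral_fun_mul_eq_mul_integral ((hXvmeas x).sub measurable_const).aestronglyMeasurable
            ((hXvmeas y).sub measurable_const).aestronglyMeasurable
        have h2 : ∫ ω, (Xv x ω - μ0) ∂ℙ = 0 := by
          rw [integral_sub (hTint x hxT hxne (fun t => t) measurable_id hXint)
            (integrable_const _), integral_const, probReal_univ]
          have := hTval x hxT hxne (fun t => t) measurable_id
          rw [this]
          simp [hμ0]
        rw [h1, h2, zero_mul]
    have hW_sm : StronglyMeasurable[treeFiltration T Xv m]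
        (fun ω => pT Xv x m ω * pT Xv y m ω) :=
      ((pT_sm T hTpref Xv hroot m m x hxT le_rfl).mul
        (pT_sm T hTpref Xv hroot m m y hyT le_rfl))
    have hcond_g : ℙ[(fun ω => (Xv x ω - μ0) * (Xv y ω - μ0)) | treeFiltration T Xv m]
        =ᵐ[ℙ] fun _ => if x = y then σ2 else 0 := by
      have hg_sm : StronglyMeasurable[deepAlg T Xv m]
          (fun ω => (Xv x ω - μ0) * (Xv y ω - μ0)) := by
        refine Measurable.stronglyMeasurable ?_
        exact ((measurable_deep T Xv m x hxT hxne (by omega)).sub measurable_const).mul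
          ((measurable_deep T Xv m y hyT hyne (by omega)).sub measurable_const)
      have := condExp_indep_eq (μ := ℙ) (deepAlg_le T Xv hXvmeas m) hle2 hg_sm
        (deepAlg_indep T Xv hXvmeas hroot hindep m)
      refine this.trans (Filter.EventuallyEq.of_eq ?_)
      funext ω
      exact hgval
    have hmul := condExp_mul_of_stronglyMeasurable_left (μ := ℙ) hW_sm
      (by
        rw [show (fun ω => pT Xv x m ω * pT Xv y m ω) * (fun ω => (Xv x ω - μ0)
          * (Xv y ω - μ0)) = fun ω => (pT Xv x m ω * pT Xv y m ω)
          * ((Xv x ω - μ0) * (Xv y ω - μ0)) from rfl]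
        exact hWg_int)
      hg_int
    have hsmul := condExp_smul (μ := ℙ) (m := treeFiltration T Xv m) (c x * c y)
      ((fun ω => pT Xv x m ω * pT Xv y m ω) * fun ω => (Xv x ω - μ0) * (Xv y ω - μ0))
    refine ⟨hWg_int.smul (c x * c y), ?_⟩
    refine hsmul.trans ?_
    have : ((fun ω => pT Xv x m ω * pT Xv y m ω) * fun ω => (Xv x ω - μ0) * (Xv y ω - μ0))
        = fun ω => (pT Xv x m ω * pT Xv y m ω) * ((Xv x ω - μ0) * (Xv y ω - μ0)) := rfl
    refine Filter.EventuallyEq.trans ?_ (Filter.EventuallyEq.of_eq rfl)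
    have hstep := hmul.trans (Filter.EventuallyEq.mul
      (Filter.EventuallyEq.refl _ (fun ω => pT Xv x m ω * pT Xv y m ω)) hcond_g)
    exact hstep.const_smul (c x * c y) |>.mono fun ω hω => by
      simp only [Pi.smul_apply, Pi.mul_apply] at hω ⊢
      rw [hω]
  -- expand the square
  have hsqfun : (fun ω => (∑ x ∈ E, c x * pT Xv x m ω * (Xv x ω - μ0)) ^ 2)
      = ∑ p ∈ E ×ˢ E, (fun ω => (c p.1 * c p.2) • ((pT Xv p.1 m ω * pT Xv p.2 m ω)
          * ((Xv p.1 ω - μ0) * (Xv p.2 ω - μ0)))) := by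
    funext ω
    rw [Finset.sum_apply, sq, Finset.sum_mul_sum]
    rw [← Finset.sum_product' (f := fun x y => (c x * pT Xv x m ω * (Xv x ω - μ0))
      * (c y * pT Xv y m ω * (Xv y ω - μ0)))]
    refine Finset.sum_congr rfl fun p _ => ?_
    simp only [smul_eq_mul]
    ring
  rw [hsqfun]
  have h1 := condExp_finset_sum (μ := ℙ) (m := treeFiltration T Xv m)
    (fun p hp => (main p hp).1)
  refine h1.trans ?_
  have h2 := ae_sum_congr (E ×ˢ E) _ _ (fun p hp => (main p hp).2)
  refine Filter.EventuallyEq.trans (Filter.EventuallyEq.of_eq (funext fun ω =>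
    (Finset.sum_apply ω (E ×ˢ E) _))) (h2.trans (Filter.EventuallyEq.of_eq ?_))
  funext ω
  rw [Finset.sum_product]
  rw [Finset.mul_sum]
  refine Finset.sum_congr rfl fun x hx => ?_
  rw [Finset.sum_eq_single x]
  · rw [if_pos rfl]
    simp only [smul_eq_mul]
    ring
  · intro y hy hne
    rw [if_neg (fun h => hne h.symm)]
    simp
  · intro hx'
    exact absurd hx hx'


lemma pT_sq (Xv : List ℕ → Ω → ℝ) (v : List ℕ) (n : ℕ) (ω : Ω) :
    pT (fun u ω' => Xv u ω' ^ 2) v n ω = pT Xv v n ω ^ 2 := by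
  rw [pT, pT, ← Finset.prod_pow]

lemma rhs_eq (T : Set (List ℕ)) (hTne : T.Nonempty)
    (hTpref : ∀ u v : List ℕ, u <+: v → v ∈ T → u ∈ T)
    (α : List ℕ → ℝ) (hαT : ∀ v ∉ T, α v = 0) (hαfin : {v | α v ≠ 0}.Finite)
    (Xv : List ℕ → Ω → ℝ) (μ0 σ2 : ℝ) (ω : Ω) :
    treeSum T (fun v ω' => Xv v ω' ^ 2) (newWeight T α μ0 σ2) ω
      = (∑ v ∈ hαfin.toFinset, α v * μ0 ^ v.length) ^ 2
        + ∑ m ∈ Finset.range ((hαfin.toFinset).sup List.length),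
            σ2 * ∑ x ∈ (prefFin hαfin.toFinset).filter (fun x => x.length = m + 1),
              cw hαfin.toFinset α μ0 x ^ 2 * pT Xv x m ω ^ 2 := by
  classical
  set A := hαfin.toFinset with hA
  set L := A.sup List.length with hL
  have hmemA : ∀ v, v ∈ A ↔ α v ≠ 0 := fun v => Set.Finite.mem_toFinset _
  have hAT : ∀ v ∈ A, v ∈ T := fun v hv =>
    by_contra fun hT => (hmemA v).1 hv (hαT v hT)
  have hnilT : [] ∈ T := by
    obtain ⟨w, hw⟩ := hTne
    exact hTpref [] w List.nil_prefix hw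
  have hprefT : ∀ x ∈ prefFin A, x ∈ T := by
    intro x hx
    obtain ⟨v, hv, hpre⟩ := mem_prefFin.1 hx
    exact hTpref x v hpre (hAT v hv)
  set c0 := ∑ v ∈ A, α v * μ0 ^ v.length with hc0def
  set Xv2 : List ℕ → Ω → ℝ := fun u ω' => Xv u ω' ^ 2 with hXv2
  -- (a) identify the inner finsum with `cw`
  have ha : ∀ x : List ℕ,
      (∑ᶠ y ∈ {y ∈ T | x <+: y}, α y * μ0 ^ (y.length - x.length)) = cw A α μ0 x := by
    intro x
    rw [cw]
    refine finsum_mem_eq_sum_of_inter_support_eq _ ?_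
    ext y
    simp only [Set.mem_inter_iff, Set.mem_setOf_eq, Function.mem_support, Finset.coe_filter,
      hmemA]
    constructor
    · rintro ⟨⟨hyT, hpre⟩, hne⟩
      refine ⟨⟨fun h0 => hne (by rw [h0, zero_mul]), hpre⟩, hne⟩
    · rintro ⟨⟨hyA, hpre⟩, hne⟩
      exact ⟨⟨by_contra fun hT => hyA (hαT y hT), hpre⟩, hne⟩
  -- (b) identify the root finsum
  have hb : (∑ᶠ x ∈ T, α x * μ0 ^ x.length) = c0 := by
    rw [hc0def]
    refine finsum_mem_eq_sum_of_inter_support_eq _ ?_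
    ext x
    simp only [Set.mem_inter_iff, Function.mem_support, Set.Finite.coe_toFinset,
      Set.mem_setOf_eq, hA]
    constructor
    · rintro ⟨hxT, hne⟩
      exact ⟨fun h0 => hne (by rw [h0, zero_mul]), hne⟩
    · rintro ⟨hxα, hne⟩
      exact ⟨by_contra fun hT => hxα (hαT x hT), hne⟩
  set chF : List ℕ → Finset (List ℕ) := fun v =>
    (prefFin A).filter (fun x => v <+: x ∧ x.length = v.length + 1) with hchF
  have hcwsupp : ∀ x, cw A α μ0 x ≠ 0 → x ∈ prefFin A := by
    intro x hne
    rw [cw] at hne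
    obtain ⟨y, hy, -⟩ := Finset.exists_ne_zero_of_sum_ne_zero hne
    obtain ⟨hyA, hpre⟩ := Finset.mem_filter.1 hy
    exact mem_prefFin.2 ⟨y, hyA, hpre⟩
  -- (c) newWeight on T
  have hc : ∀ v ∈ T, newWeight T α μ0 σ2 v
      = (if v = [] then c0 ^ 2 else 0) + σ2 * ∑ x ∈ chF v, cw A α μ0 x ^ 2 := by
    intro v hv
    rw [newWeight, if_pos hv]
    simp only [ha, hb]
    congr 1
    congr 1
    refine finsum_mem_eq_sum_of_inter_support_eq _ ?_
    ext x
    simp only [Set.mem_inter_iff, Set.mem_setOf_eq, Function.mem_support, hchF,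
      Finset.coe_filter, Finset.mem_coe]
    constructor
    · rintro ⟨⟨hxT, hpre, hlen⟩, hne⟩
      have hcw : cw A α μ0 x ≠ 0 := fun h0 => hne (by rw [h0]; ring)
      exact ⟨⟨hcwsupp x hcw, hpre, hlen⟩, hne⟩
    · rintro ⟨⟨hxP, hpre, hlen⟩, hne⟩
      exact ⟨⟨hprefT x hxP, hpre, hlen⟩, hne⟩
  -- (d) treeSum as a finite sum over insert [] (prefFin A)
  set PF := insert ([] : List ℕ) (prefFin A) with hPF
  have hPFT : ∀ v ∈ PF, v ∈ T := by
    intro v hv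
    rcases Finset.mem_insert.1 hv with rfl | hv'
    · exact hnilT
    · exact hprefT v hv'
  have hd : treeSum T Xv2 (newWeight T α μ0 σ2) ω
      = ∑ v ∈ PF, newWeight T α μ0 σ2 v * pT Xv2 v v.length ω := by
    rw [treeSum]
    refine finsum_mem_eq_sum_of_inter_support_eq _ ?_
    ext v
    simp only [Set.mem_inter_iff, Function.mem_support, Finset.mem_coe]
    constructor
    · rintro ⟨hvT, hne⟩
      refine ⟨?_, hne⟩
      have hβ : newWeight T α μ0 σ2 v ≠ 0 := fun h0 => hne (by rw [h0, zero_mul])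
      rw [hc v hvT] at hβ
      rcases eq_or_ne v ([] : List ℕ) with rfl | hvne
      · exact Finset.mem_insert_self _ _
      · rw [if_neg hvne, zero_add] at hβ
        have hsum : (∑ x ∈ chF v, cw A α μ0 x ^ 2) ≠ 0 := fun h0 => hβ (by rw [h0, mul_zero])
        obtain ⟨x, hx, hxne⟩ := Finset.exists_ne_zero_of_sum_ne_zero hsum
        obtain ⟨hxP, hpre, -⟩ := Finset.mem_filter.1 hx
        obtain ⟨y, hyA, hpre'⟩ := mem_prefFin.1 hxP
        exact Finset.mem_insert_of_mem (mem_prefFin.2 ⟨y, hyA, hpre.trans hpre'⟩)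
    · rintro ⟨hvPF, hne⟩
      exact ⟨hPFT v hvPF, hne⟩
  rw [hd, Finset.sum_congr rfl (fun v hv => by rw [hc v (hPFT v hv)])]
  have hsplit : ∑ v ∈ PF, ((if v = [] then c0 ^ 2 else 0)
        + σ2 * ∑ x ∈ chF v, cw A α μ0 x ^ 2) * pT Xv2 v v.length ω
      = (∑ v ∈ PF, (if v = [] then c0 ^ 2 else 0) * pT Xv2 v v.length ω)
        + ∑ v ∈ PF, (σ2 * ∑ x ∈ chF v, cw A α μ0 x ^ 2) * pT Xv2 v v.length ω := by
    rw [← Finset.sum_add_distrib]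
    exact Finset.sum_congr rfl fun v _ => by ring
  rw [hsplit]
  congr 1
  -- root part
  · have h1 : ∀ v ∈ PF, (if v = [] then c0 ^ 2 else 0) * pT Xv2 v v.length ω
        = if v = [] then c0 ^ 2 else 0 := by
      intro v _
      rcases eq_or_ne v ([] : List ℕ) with rfl | hvne
      · rw [if_pos rfl]
        have h0 : pT Xv2 ([] : List ℕ) (List.length ([] : List ℕ)) ω = 1 := by
          rw [pT]; simp
        rw [h0, mul_one]
      · rw [if_neg hvne, zero_mul]
    rw [Finset.sum_congr rfl h1, Finset.sum_ite_eq' PF ([] : List ℕ) (fun _ => c0 ^ 2),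
      if_pos (Finset.mem_insert_self _ _)]
  -- children part
  · have h2 : ∀ v ∈ PF, (σ2 * ∑ x ∈ chF v, cw A α μ0 x ^ 2) * pT Xv2 v v.length ω
        = ∑ x ∈ prefFin A, (if v <+: x ∧ x.length = v.length + 1
            then σ2 * cw A α μ0 x ^ 2 * pT Xv2 v v.length ω else 0) := by
      intro v _
      rw [hchF, Finset.sum_filter, Finset.mul_sum, Finset.sum_mul]
      refine Finset.sum_congr rfl fun x _ => ?_
      split_ifs with h <;> ring
    rw [Finset.sum_congr rfl h2, Finset.sum_comm]
    have h3 : ∀ x ∈ prefFin A,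
        (∑ v ∈ PF, if v <+: x ∧ x.length = v.length + 1
            then σ2 * cw A α μ0 x ^ 2 * pT Xv2 v v.length ω else 0)
        = if 1 ≤ x.length
            then σ2 * cw A α μ0 x ^ 2 * pT Xv2 (x.take (x.length - 1)) (x.length - 1) ω
            else 0 := by
      intro x hx
      by_cases hx1 : 1 ≤ x.length
      · rw [if_pos hx1]
        have hlen0 : (x.take (x.length - 1)).length = x.length - 1 := by
          simp only [List.length_take]; omega
        have hmem0 : x.take (x.length - 1) ∈ PF := by
          obtain ⟨y, hyA, hpre⟩ := mem_prefFin.1 hx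
          exact Finset.mem_insert_of_mem
            (mem_prefFin.2 ⟨y, hyA, (List.take_prefix _ _).trans hpre⟩)
        rw [Finset.sum_eq_single_of_mem (x.take (x.length - 1)) hmem0]
        · rw [if_pos ⟨List.take_prefix _ _, by omega⟩, hlen0]
        · intro v _ hvne
          rw [if_neg]
          rintro ⟨hpre, hlenv⟩
          refine hvne ?_
          have := List.prefix_iff_eq_take.1 hpre
          rw [this]
          congr 1
          omega
      · rw [if_neg hx1]
        refine Finset.sum_eq_zero fun v _ => ?_
        rw [if_neg]
        rintro ⟨-, hlenv⟩
        omega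
    rw [Finset.sum_congr rfl h3, ← Finset.sum_filter]
    rw [← Finset.sum_fiberwise_of_maps_to (g := fun x => x.length - 1)
      (t := Finset.range L) ?_]
    · refine Finset.sum_congr rfl fun m hm => ?_
      have hfib : ((prefFin A).filter (fun x => 1 ≤ x.length)).filter
            (fun x => x.length - 1 = m)
          = (prefFin A).filter (fun x => x.length = m + 1) := by
        rw [Finset.filter_filter]
        refine Finset.filter_congr fun x _ => ?_
        constructor
        · rintro ⟨h1, h2⟩; omega
        · intro h; omega
      rw [hfib, Finset.mul_sum]
      refine Finset.sum_congr rfl fun x hx => ?_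
      obtain ⟨-, hxlen⟩ := Finset.mem_filter.1 hx
      have he1 : x.length - 1 = m := by omega
      have he2 : pT Xv2 (x.take (x.length - 1)) (x.length - 1) ω = pT Xv x m ω ^ 2 := by
        rw [he1, pT_take_eq Xv2 x m m le_rfl ω, pT_sq]
      rw [he2]
      ring
    · intro x hx
      obtain ⟨hxP, hx1⟩ := Finset.mem_filter.1 hx
      obtain ⟨y, hyA, hpre⟩ := mem_prefFin.1 hxP
      have h1 : x.length ≤ y.length := hpre.length_le
      have h2 : y.length ≤ L := Finset.le_sup hyA
      rw [Finset.mem_range]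
      show x.length - 1 < L
      omega

end Aux3

/-- Lemma 2.4: the conditional square function of `M = Θ_T(X, α)` is again a weighted
sum on `T`: almost surely
`s(M)² = M_0² + ∑_{m ≥ 1} E[(M_m - M_{m-1})² | F_{m-1}] = Θ_T(X², β)`,
where `β` is the new weight associated to `(T, α, X)`. -/
theorem conditional_square_function_eq_treeSum
    {Ω : Type*} [MeasureSpace Ω] [IsProbabilityMeasure (ℙ : Measure Ω)]
    (T : Set (List ℕ)) (hTne : T.Nonempty)
    (hTpref : ∀ u v : List ℕ, u <+: v → v ∈ T → u ∈ T)
    (α : List ℕ → ℝ) (hα0 : ∀ v, 0 ≤ α v) (hαT : ∀ v ∉ T, α v = 0)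
    (hαfin : {v | α v ≠ 0}.Finite)
    (X : Ω → ℝ) (hXmeas : Measurable X) (hX0 : ∀ ω, 0 ≤ X ω)
    (hXsq : Integrable (fun ω => X ω ^ 2) ℙ)
    (Xv : List ℕ → Ω → ℝ) (hXvmeas : ∀ v, Measurable (Xv v))
    (hroot : ∀ ω, Xv [] ω = 1)
    (hindep : iIndepFun
      (fun v : {v : List ℕ // v ∈ T ∧ v ≠ []} => Xv v.1) ℙ)
    (hident : ∀ v ∈ T, v ≠ [] → Measure.map (Xv v) ℙ = Measure.map X ℙ) :
    ∀ᵐ ω ∂ℙ,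
      ((ℙ[treeSum T Xv α | treeFiltration T Xv 0]) ω) ^ 2 +
        ∑' m : ℕ,
          (ℙ[fun ω' =>
              ((ℙ[treeSum T Xv α | treeFiltration T Xv (m + 1)]) ω' -
                (ℙ[treeSum T Xv α | treeFiltration T Xv m]) ω') ^ 2
            | treeFiltration T Xv m]) ω
      = treeSum T (fun v ω' => Xv v ω' ^ 2)
          (newWeight T α (∫ ω', X ω' ∂ℙ) (variance X ℙ)) ω := by
  classical
  have hcond : ∀ m : ℕ, ℙ[treeSum T Xv α | treeFiltration T Xv m] =ᵐ[ℙ]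
      fun ω => ∑ v ∈ hαfin.toFinset, α v *
        ((∫ ω', X ω' ∂ℙ) ^ (v.length - m) * pT Xv v (min v.length m) ω) := by
    intro m
    have hX2 : MemLp X 2 ℙ := (memLp_two_iff_integrable_sq hXmeas.aestronglyMeasurable).2 hXsq
    exact condexp_treeSum T hTpref α hαT hαfin Xv hXvmeas hroot hindep X hXmeas
      (hX2.integrable one_le_two) hident m
  have h0 : ℙ[treeSum T Xv α | treeFiltration T Xv 0] =ᵐ[ℙ]
      fun _ => ∑ v ∈ hαfin.toFinset, α v * (∫ ω', X ω' ∂ℙ) ^ v.length := by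
    refine (hcond 0).trans (Filter.EventuallyEq.of_eq ?_)
    funext ω
    refine Finset.sum_congr rfl fun v _ => ?_
    have h1 : pT Xv v (min v.length 0) ω = 1 := by
      rw [Nat.min_zero, pT]
      simp
    rw [h1, mul_one, Nat.sub_zero]
  have hprefT' : ∀ x ∈ prefFin hαfin.toFinset, x ∈ T := by
    intro x hx
    obtain ⟨v, hv, hpre⟩ := mem_prefFin.1 hx
    rw [Set.Finite.mem_toFinset] at hv
    exact hTpref x v hpre (by_contra fun hT => hv (hαT v hT))
  have hterm : ∀ m : ℕ,
      ℙ[fun ω' =>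
          ((ℙ[treeSum T Xv α | treeFiltration T Xv (m + 1)]) ω' -
            (ℙ[treeSum T Xv α | treeFiltration T Xv m]) ω') ^ 2
        | treeFiltration T Xv m] =ᵐ[ℙ]
      fun ω => variance X ℙ * ∑ x ∈ (prefFin hαfin.toFinset).filter
          (fun x => x.length = m + 1),
        cw hαfin.toFinset α (∫ ω', X ω' ∂ℙ) x ^ 2 * pT Xv x m ω ^ 2 := by
    intro m
    have hdiff : (fun ω' =>
        ((ℙ[treeSum T Xv α | treeFiltration T Xv (m + 1)]) ω' -
          (ℙ[treeSum T Xv α | treeFiltration T Xv m]) ω') ^ 2) =ᵐ[ℙ]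
        fun ω => (∑ x ∈ (prefFin hαfin.toFinset).filter (fun x => x.length = m + 1),
          cw hαfin.toFinset α (∫ ω', X ω' ∂ℙ) x * pT Xv x m ω
            * (Xv x ω - ∫ ω', X ω' ∂ℙ)) ^ 2 := by
      filter_upwards [hcond (m + 1), hcond m] with ω e1 e2
      rw [e1, e2, diff_eq hαfin.toFinset α (∫ ω', X ω' ∂ℙ) Xv m ω]
    have hE : ∀ x ∈ (prefFin hαfin.toFinset).filter (fun x => x.length = m + 1),
        x ∈ T ∧ x.length = m + 1 := by
      intro x hx
      obtain ⟨hxP, hxlen⟩ := Finset.mem_filter.1 hx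
      exact ⟨hprefT' x hxP, hxlen⟩
    exact (condExp_congr_ae hdiff).trans
      (condexp_sq T hTpref Xv hXvmeas hroot hindep X hXmeas hXsq hident m _ hE
        (cw hαfin.toFinset α (∫ ω', X ω' ∂ℙ)))
  filter_upwards [h0, ae_all_iff.2 hterm] with ω e0 eterm
  rw [e0]
  have htsum : (∑' m : ℕ,
      (ℙ[fun ω' =>
          ((ℙ[treeSum T Xv α | treeFiltration T Xv (m + 1)]) ω' -
            (ℙ[treeSum T Xv α | treeFiltration T Xv m]) ω') ^ 2
        | treeFiltration T Xv m]) ω)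
      = ∑ m ∈ Finset.range (hαfin.toFinset.sup List.length),
          variance X ℙ * ∑ x ∈ (prefFin hαfin.toFinset).filter
            (fun x => x.length = m + 1),
          cw hαfin.toFinset α (∫ ω', X ω' ∂ℙ) x ^ 2 * pT Xv x m ω ^ 2 := by
    rw [tsum_eq_sum (s := Finset.range (hαfin.toFinset.sup List.length)) ?_]
    · exact Finset.sum_congr rfl fun m _ => eterm m
    · intro m hm
      rw [eterm m]
      have hempty : (prefFin hαfin.toFinset).filter (fun x => x.length = m + 1) = ∅ := by
        rw [Finset.filter_eq_empty_iff]
        intro x hx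
        obtain ⟨y, hyA, hpre⟩ := mem_prefFin.1 hx
        have h1 := hpre.length_le
        have h2 : y.length ≤ hαfin.toFinset.sup List.length := Finset.le_sup hyA
        rw [Finset.mem_range, not_lt] at hm
        omega
      rw [hempty]
      simp
  rw [htsum]
  exact (rhs_eq T hTne hTpref α hαT hαfin Xv (∫ ω', X ω' ∂ℙ) (variance X ℙ) ω).symm
end

section
/- Let b ≥ 2 be an integer and let W be a nonnegative random variable with E[W] = 1. The following are equivalent: (i) W is equal in distribution to W_TC; (ii) E[W^q] = b^{q−1} for every q > 0; (iii) there exist two distinct real numbers q₁ ≠ q₂ in (1,∞) with E[W^{q₁}] = b^{q₁−1} and E[W^{q₂}] = b^{q₂−1}. -/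
open MeasureTheory ProbabilityTheory Filter

lemma aux_strict {a β b t : ℝ} (ha : 0 < a) (hab : a < β) (hb : 0 < b) (ht : 0 < t)
    (hne : t ≠ b) :
    (β / a) * b ^ (β - a) * t ^ a < t ^ β + (β / a - 1) * b ^ β := by
  set γ := β / a with hγdef
  have hγ : 1 < γ := (one_lt_div ha).2 hab
  have hu : 0 < t / b := div_pos ht hb
  have hup : 0 < (t / b) ^ a := Real.rpow_pos_of_pos hu a
  have hs1 : -1 ≤ (t / b) ^ a - 1 := by linarith
  have hs0 : (t / b) ^ a - 1 ≠ 0 := by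
    intro h
    apply hne
    have h1 : (t / b) ^ a = 1 := by linarith
    have h2 : Real.log ((t / b) ^ a) = 0 := by rw [h1, Real.log_one]
    rw [Real.log_rpow hu] at h2
    have h3 : Real.log (t / b) = 0 := by
      rcases mul_eq_zero.1 h2 with h | h
      · exact absurd h ha.ne'
      · exact h
    rcases Real.log_eq_zero.1 h3 with h | h | h
    · exact absurd h hu.ne'
    · field_simp at h; exact h
    · have : t / b ≤ 0 := by rw [h]; norm_num
      linarith
  have hbern := one_add_mul_self_lt_rpow_one_add hs1 hs0 hγ
  have h1s : 1 + ((t / b) ^ a - 1) = (t / b) ^ a := by ring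
  have hpow : (1 + ((t / b) ^ a - 1)) ^ γ = (t / b) ^ β := by
    rw [h1s, ← Real.rpow_mul hu.le]
    congr 1
    rw [hγdef]; field_simp
  rw [hpow] at hbern
  have e1 : (t / b) ^ a = t ^ a / b ^ a := Real.div_rpow ht.le hb.le a
  have e2 : (t / b) ^ β = t ^ β / b ^ β := Real.div_rpow ht.le hb.le β
  have e3 : b ^ (β - a) = b ^ β / b ^ a := Real.rpow_sub hb β a
  have hbβ : (0:ℝ) < b ^ β := Real.rpow_pos_of_pos hb β
  rw [e1, e2] at hbern
  have key : b ^ β * (1 + γ * (t ^ a / b ^ a - 1)) < t ^ β := by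
    have := mul_lt_mul_of_pos_left hbern hbβ
    rwa [mul_div_cancel₀ _ hbβ.ne'] at this
  have hrw : γ * b ^ (β - a) * t ^ a
      = b ^ β * (1 + γ * (t ^ a / b ^ a - 1)) + (γ - 1) * b ^ β := by
    rw [e3]; ring
  rw [hrw]
  linarith

lemma helper_3_to_1 {Ω : Type*} [MeasureSpace Ω] [IsProbabilityMeasure (ℙ : Measure Ω)]
    (b : ℕ) (hb : 2 ≤ b)
    (W : Ω → ℝ) (hWmeas : Measurable W) (hW0 : ∀ ω, 0 ≤ W ω)
    (hWmean : ∫ ω, W ω ∂ℙ = 1)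
    {q₁ q₂ : ℝ} (hq1 : 1 < q₁) (hq12 : q₁ < q₂)
    (m1 : ∫ ω, W ω ^ q₁ ∂ℙ = (b : ℝ) ^ (q₁ - 1))
    (m2 : ∫ ω, W ω ^ q₂ ∂ℙ = (b : ℝ) ^ (q₂ - 1)) :
    Measure.map W ℙ = WTCdist b := by
  have hb0 : (0:ℝ) < b := by positivity
  have hq2 : 1 < q₂ := hq1.trans hq12
  -- integrability
  have iW : Integrable W ℙ := by
    by_contra h
    rw [integral_undef h] at hWmean
    norm_num at hWmean
  have i1 : Integrable (fun ω => W ω ^ q₁) ℙ := by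
    by_contra h
    rw [integral_undef h] at m1
    exact absurd m1.symm (Real.rpow_pos_of_pos hb0 _).ne'
  have i2 : Integrable (fun ω => W ω ^ q₂) ℙ := by
    by_contra h
    rw [integral_undef h] at m2
    exact absurd m2.symm (Real.rpow_pos_of_pos hb0 _).ne'
  set a := q₁ - 1 with hadef
  set β := q₂ - 1 with hβdef
  have ha : 0 < a := by simp [hadef]; linarith
  have hab : a < β := by simp [hadef, hβdef]; linarith
  set A := (β / a) * (b:ℝ) ^ (β - a) with hAdef
  set B := (β / a - 1) * (b:ℝ) ^ β with hBdef
  set h : Ω → ℝ := fun ω => W ω ^ q₂ - A * W ω ^ q₁ + B * W ω with hhdef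
  have ih : Integrable h ℙ := (i2.sub (i1.const_mul A)).add (iW.const_mul B)
  have isub : Integrable (fun ω => W ω ^ q₂ - A * W ω ^ q₁) ℙ := i2.sub (i1.const_mul A)
  -- pointwise factorization for positive values
  have hfact : ∀ ω, 0 < W ω → h ω = (W ω ^ β - A * W ω ^ a + B) * W ω := by
    intro ω hω
    have eβ : β + 1 = q₂ := by rw [hβdef]; ring
    have eα : a + 1 = q₁ := by rw [hadef]; ring
    have e2 : W ω ^ q₂ = W ω ^ β * W ω := by
      rw [← eβ, Real.rpow_add hω, Real.rpow_one]
    have e1 : W ω ^ q₁ = W ω ^ a * W ω := by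
      rw [← eα, Real.rpow_add hω, Real.rpow_one]
    rw [hhdef]
    simp only
    rw [e1, e2]
    ring
  -- value at b
  have hvalb : (b:ℝ) ^ β - A * (b:ℝ) ^ a + B = 0 := by
    rw [hAdef, hBdef]
    have hbb : (b:ℝ) ^ (β - a) * (b:ℝ) ^ a = (b:ℝ) ^ β := by
      rw [← Real.rpow_add hb0]; ring_nf
    linear_combination (-(β / a)) * hbb
  have hnn : ∀ ω, 0 ≤ h ω := by
    intro ω
    rcases (hW0 ω).eq_or_lt with h0 | hpos
    · rw [hhdef]; simp only
      rw [← h0, Real.zero_rpow (by linarith : q₁ ≠ 0), Real.zero_rpow (by linarith : q₂ ≠ 0)]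
      ring_nf
      exact le_refl 0
    · rw [hfact ω hpos]
      rcases eq_or_ne (W ω) (b:ℝ) with heq | hne
      · rw [heq, hvalb, zero_mul]
      · have hs := aux_strict ha hab hb0 hpos hne
        have hABs : A * W ω ^ a < W ω ^ β + B := by rw [hAdef, hBdef]; linarith
        have hin : 0 < W ω ^ β - A * W ω ^ a + B := by linarith
        positivity
  -- the integral of h is zero
  have hint0 : ∫ ω, h ω ∂ℙ = 0 := by
    have hrw : ∫ ω, h ω ∂ℙ = ∫ ω, (W ω ^ q₂ - A * W ω ^ q₁) + B * W ω ∂ℙ := by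
      apply integral_congr_ae
      filter_upwards with ω
      rw [hhdef]
    rw [hrw, integral_add isub (iW.const_mul B),
      integral_sub i2 (i1.const_mul A), integral_const_mul, integral_const_mul,
      m1, m2, hWmean]
    have hA : A * (b:ℝ) ^ a = (β / a) * (b:ℝ) ^ β := by
      rw [hAdef, mul_assoc, ← Real.rpow_add hb0]
      ring_nf
    rw [hA, hBdef]
    ring
  have hae : ∀ᵐ ω ∂ℙ, h ω = 0 := (integral_eq_zero_iff_of_nonneg hnn ih).1 hint0
  have hmem : ∀ᵐ ω ∂ℙ, W ω = 0 ∨ W ω = (b:ℝ) := by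
    filter_upwards [hae] with ω hω
    rcases (hW0 ω).eq_or_lt with h0 | hpos
    · left; exact h0.symm
    · right
      by_contra hne
      have hs := aux_strict ha hab hb0 hpos hne
      have hABs : A * W ω ^ a < W ω ^ β + B := by rw [hAdef, hBdef]; linarith
      have hin : 0 < W ω ^ β - A * W ω ^ a + B := by linarith
      have hpos' : 0 < h ω := by rw [hfact ω hpos]; positivity
      exact absurd hω hpos'.ne'
  -- identify the distribution
  set S : Set Ω := W ⁻¹' {(b:ℝ)} with hSdef
  have hS : MeasurableSet S := hWmeas (measurableSet_singleton _)
  have hbne0 : (b:ℝ) ≠ 0 := hb0.ne'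
  have hWae : W =ᵐ[ℙ] S.indicator fun _ => (b:ℝ) := by
    filter_upwards [hmem] with ω hω
    rcases hω with h0 | hbb
    · have hnotin : ω ∉ S := by
        simp only [hSdef, Set.mem_preimage, Set.mem_singleton_iff]
        rw [h0]; exact (Ne.symm hbne0)
      rw [Set.indicator_of_notMem hnotin, h0]
    · have hin : ω ∈ S := by
        simpa only [hSdef, Set.mem_preimage, Set.mem_singleton_iff] using hbb
      rw [Set.indicator_of_mem hin, hbb]
  have hbEnn : (b : ENNReal) ≠ 0 := by
    simp only [ne_eq, Nat.cast_eq_zero]; omega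
  have hPS : ℙ S = (b : ENNReal)⁻¹ := by
    have h1 : (ℙ S).toReal • (b:ℝ) = 1 := by
      rw [← measureReal_def, ← integral_indicator_const ((b:ℝ)) hS, ← integral_congr_ae hWae, hWmean]
    have h2 : (ℙ S).toReal = (b:ℝ)⁻¹ := by
      rw [smul_eq_mul] at h1
      field_simp at h1 ⊢
      linarith
    refine (ENNReal.toReal_eq_toReal_iff' (measure_ne_top ℙ S) ?_).1 ?_
    · exact ENNReal.inv_ne_top.2 hbEnn
    · rw [h2, ENNReal.toReal_inv]
      simp
  -- compute the pushforward
  classical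
  have hVmeas : Measurable (S.indicator fun _ : Ω => (b:ℝ)) := measurable_const.indicator hS
  rw [Measure.map_congr hWae]
  have hinvle : (b : ENNReal)⁻¹ ≤ 1 := by
    rw [ENNReal.inv_le_one]
    exact_mod_cast Nat.one_le_of_lt hb
  ext s hs
  rw [Measure.map_apply hVmeas hs]
  have hRHS : WTCdist b s
      = (b : ENNReal)⁻¹ * s.indicator 1 (b:ℝ) + (1 - (b : ENNReal)⁻¹) * s.indicator 1 0 := by
    rw [WTCdist]
    simp [Measure.dirac_apply]
  rw [hRHS]
  by_cases h1 : (b:ℝ) ∈ s <;> by_cases h2 : (0:ℝ) ∈ s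
  · have hpre : (S.indicator fun _ => (b:ℝ)) ⁻¹' s = Set.univ := by
      ext ω
      simp only [Set.mem_preimage, Set.indicator_apply, Set.mem_univ, iff_true]
      split_ifs <;> assumption
    rw [hpre, Set.indicator_of_mem h1, Set.indicator_of_mem h2]
    simp only [Pi.one_apply, mul_one, measure_univ]
    exact ((add_comm _ _).trans (tsub_add_cancel_of_le hinvle)).symm
  · have hpre : (S.indicator fun _ => (b:ℝ)) ⁻¹' s = S := by
      ext ω
      by_cases hω : ω ∈ S <;> simp [Set.indicator_apply, hω, h1, h2]
    rw [hpre, Set.indicator_of_mem h1, Set.indicator_of_notMem h2]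
    simp only [Pi.one_apply, mul_one, mul_zero, add_zero]
    exact hPS
  · have hpre : (S.indicator fun _ => (b:ℝ)) ⁻¹' s = Sᶜ := by
      ext ω
      by_cases hω : ω ∈ S <;> simp [Set.indicator_apply, hω, h1, h2]
    rw [hpre, Set.indicator_of_notMem h1, Set.indicator_of_mem h2]
    simp only [Pi.one_apply, mul_one, mul_zero, zero_add]
    rw [measure_compl hS (measure_ne_top ℙ S), measure_univ, hPS]
  · have hpre : (S.indicator fun _ => (b:ℝ)) ⁻¹' s = ∅ := by
      ext ω
      by_cases hω : ω ∈ S <;> simp [Set.indicator_apply, hω, h1, h2]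
    rw [hpre, Set.indicator_of_notMem h1, Set.indicator_of_notMem h2]
    simp

/-- Lemma 3.2: for a nonnegative random variable `W` with `E[W] = 1`, the following
are equivalent: (i) `W` is distributed as `W_TC`; (ii) `E[W^q] = b^{q-1}` for every
`q > 0`; (iii) there are two distinct exponents `q₁ ≠ q₂` in `(1, ∞)` with
`E[W^{q₁}] = b^{q₁-1}` and `E[W^{q₂}] = b^{q₂-1}`. -/
theorem totally_critical_characterization
    {Ω : Type*} [MeasureSpace Ω] [IsProbabilityMeasure (ℙ : Measure Ω)]
    (b : ℕ) (hb : 2 ≤ b)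
    (W : Ω → ℝ) (hWmeas : Measurable W) (hW0 : ∀ ω, 0 ≤ W ω)
    (hWmean : ∫ ω, W ω ∂ℙ = 1) :
    List.TFAE
      [Measure.map W ℙ = WTCdist b,
       ∀ q : ℝ, 0 < q → ∫ ω, W ω ^ q ∂ℙ = (b : ℝ) ^ (q - 1),
       ∃ q₁ q₂ : ℝ, 1 < q₁ ∧ 1 < q₂ ∧ q₁ ≠ q₂ ∧
         ∫ ω, W ω ^ q₁ ∂ℙ = (b : ℝ) ^ (q₁ - 1) ∧
         ∫ ω, W ω ^ q₂ ∂ℙ = (b : ℝ) ^ (q₂ - 1)] := by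
  have hb0 : (0:ℝ) < b := by positivity
  tfae_have 1 → 2 := by
    intro h1 q hq
    have hmeas : Measurable fun x : ℝ => x ^ q :=
      (Real.continuous_rpow_const hq.le).measurable
    have key : ∫ ω, W ω ^ q ∂ℙ = ∫ x, x ^ q ∂(Measure.map W ℙ) :=
      (integral_map hWmeas.aemeasurable hmeas.aestronglyMeasurable).symm
    rw [key, h1, WTCdist]
    have hbne : (b : ENNReal) ≠ 0 := by
      simp only [ne_eq, Nat.cast_eq_zero]; omega
    have i1 : Integrable (fun x : ℝ => x ^ q)
        (((b : ENNReal)⁻¹) • Measure.dirac (b : ℝ)) :=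
      (((integrable_const ((b:ℝ) ^ q)).congr (ae_eq_dirac fun x : ℝ => x ^ q).symm)).smul_measure
        (ENNReal.inv_ne_top.2 hbne)
    have i2 : Integrable (fun x : ℝ => x ^ q)
        ((1 - (b : ENNReal)⁻¹) • Measure.dirac (0 : ℝ)) :=
      (((integrable_const ((0:ℝ) ^ q)).congr (ae_eq_dirac fun x : ℝ => x ^ q).symm)).smul_measure
        (ENNReal.sub_ne_top ENNReal.one_ne_top)
    rw [integral_add_measure i1 i2, integral_smul_measure, integral_smul_measure,
      integral_dirac, integral_dirac, Real.zero_rpow hq.ne']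
    have htr : ((b : ENNReal)⁻¹).toReal = (b:ℝ)⁻¹ := by
      rw [ENNReal.toReal_inv]; simp
    rw [htr]
    simp only [smul_eq_mul, mul_zero, add_zero]
    rw [Real.rpow_sub hb0, Real.rpow_one]
    field_simp
  tfae_have 2 → 3 := by
    intro h2
    exact ⟨2, 3, by norm_num, by norm_num, by norm_num,
      h2 2 (by norm_num), h2 3 (by norm_num)⟩
  tfae_have 3 → 1 := by
    rintro ⟨q₁, q₂, hq1, hq2, hne, m1, m2⟩
    rcases hne.lt_or_gt with h | h
    · exact helper_3_to_1 b hb W hWmeas hW0 hWmean hq1 h m1 m2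
    · exact helper_3_to_1 b hb W hWmeas hW0 hWmean hq2 h m2 m1
  tfae_finish
end
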